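/- Let f : [a,b] → ℝ be regulated and g : [a,b] → ℝ be regulated and of bounded variation. Then both the Kurzweil–Stieltjes integral (K)∫_a^b f dg and the Dushnik integral (D)∫_a^b g df exist, and (K)∫_a^b f dg = f(b)g(b) − f(a)g(a) − (D)∫_a^b g df. -/

import Mathlib

open Set Filter

/-- A tagged partition of `[a,b]`: points `a = pts 0 < pts 1 < … < pts n = b`
with tags `tag j ∈ [pts j, pts (j+1)]`. -/
structure TaggedPartition (a b : ℝ) where
  n : ℕ
  pts : ℕ → ℝ
  tag : ℕ → ℝ
  n_pos : 0 < n
  pts_zero : pts 0 = a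
  pts_last : pts n = b
  pts_mono : ∀ j < n, pts j < pts (j + 1)
  tag_mem : ∀ j < n, tag j ∈ Set.Icc (pts j) (pts (j + 1))

/-- Riemann–Stieltjes sum `S(f, dg, P)`. -/
def RS (f g : ℝ → ℝ) {a b : ℝ} (P : TaggedPartition a b) : ℝ :=
  ∑ j ∈ Finset.range P.n, f (P.tag j) * (g (P.pts (j + 1)) - g (P.pts j))

/-- `P` is `δ`-fine. -/
def IsFine (δ : ℝ → ℝ) {a b : ℝ} (P : TaggedPartition a b) : Prop :=
  ∀ j < P.n, Set.Icc (P.pts j) (P.pts (j + 1)) ⊆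
    Set.Icc (P.tag j - δ (P.tag j)) (P.tag j + δ (P.tag j))

/-- The Kurzweil–Stieltjes integral `(K)∫_a^b f dg` exists and equals `I`. -/
def HasKS (f g : ℝ → ℝ) (a b I : ℝ) : Prop :=
  ∀ ε > 0, ∃ δ : ℝ → ℝ, (∀ t ∈ Set.Icc a b, 0 < δ t ∧ δ t < 1) ∧
    ∀ P : TaggedPartition a b, IsFine δ P → |RS f g P - I| < ε

/-- The division of `P` contains all points of the finite set `D`. -/
def Refines {a b : ℝ} (P : TaggedPartition a b) (D : Finset ℝ) : Prop :=
  ∀ x ∈ D, ∃ j ≤ P.n, P.pts j = x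

/-- All tags of `P` lie strictly inside the corresponding subintervals. -/
def InteriorTags {a b : ℝ} (P : TaggedPartition a b) : Prop :=
  ∀ j < P.n, P.pts j < P.tag j ∧ P.tag j < P.pts (j + 1)

/-- The Dushnik integral `(D)∫_a^b f dg` exists and equals `I`. -/
def HasDushnik (f g : ℝ → ℝ) (a b I : ℝ) : Prop :=
  ∀ ε > 0, ∃ D : Finset ℝ, ↑D ⊆ Set.Icc a b ∧
    ∀ P : TaggedPartition a b, Refines P D → InteriorTags P → |RS f g P - I| < ε

/-- `f` is regulated on `[a,b]`: it has finite one-sided limits (within `[a,b]`)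
at every point where they make sense. -/
def Regulated (f : ℝ → ℝ) (a b : ℝ) : Prop :=
  (∀ t ∈ Set.Ioc a b, ∃ L : ℝ, Filter.Tendsto f (nhdsWithin t (Set.Ico a t)) (nhds L)) ∧
  (∀ t ∈ Set.Ico a b, ∃ L : ℝ, Filter.Tendsto f (nhdsWithin t (Set.Ioc t b)) (nhds L))

/-- The Young sum `S_Y(f, dg, P)`, where `gl t = g(t-)` and `gr t = g(t+)`
are the one-sided limit functions of `g`. -/
def YS (f gl gr g : ℝ → ℝ) {a b : ℝ} (P : TaggedPartition a b) : ℝ :=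
  ∑ j ∈ Finset.range P.n,
    (f (P.pts j) * (gr (P.pts j) - g (P.pts j))
      + f (P.tag j) * (gl (P.pts (j + 1)) - gr (P.pts j))
      + f (P.pts (j + 1)) * (g (P.pts (j + 1)) - gl (P.pts (j + 1))))

/-- The Young integral `(Y)∫_a^b f dg` exists and equals `I` (here `gl`, `gr`
are the one-sided limit functions of `g`). -/
def HasYoung (f gl gr g : ℝ → ℝ) (a b I : ℝ) : Prop :=
  ∀ ε > 0, ∃ D : Finset ℝ, ↑D ⊆ Set.Icc a b ∧
    ∀ P : TaggedPartition a b, Refines P D → InteriorTags P → |YS f gl gr g P - I| < ε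

/-- `f` is a finite step function on `[a,b]`: constant on the open subintervals
of some division `a = σ 0 < … < σ m = b`. -/
def IsStepFunction (f : ℝ → ℝ) (a b : ℝ) : Prop :=
  ∃ (m : ℕ) (σ : ℕ → ℝ), 0 < m ∧ σ 0 = a ∧ σ m = b ∧ (∀ k < m, σ k < σ (k + 1)) ∧
    ∀ k < m, ∀ x ∈ Set.Ioo (σ k) (σ (k + 1)), ∀ y ∈ Set.Ioo (σ k) (σ (k + 1)), f x = f y

/-- The (real-valued) total variation of `g` on `[a,b]`. -/
noncomputable def var (g : ℝ → ℝ) (a b : ℝ) : ℝ :=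
  (eVariationOn g (Set.Icc a b)).toReal

namespace TaggedPartition
variable {a b : ℝ} (P : TaggedPartition a b)

lemma pts_le : ∀ {j k : ℕ}, j ≤ k → k ≤ P.n → P.pts j ≤ P.pts k := by
  intro j k hjk hk
  induction k with
  | zero => simp_all
  | succ m ih =>
    rcases Nat.lt_or_ge j (m+1) with h | h
    · exact le_trans (ih (Nat.lt_succ_iff.mp h) (le_of_lt hk))
        (le_of_lt (P.pts_mono m hk))
    · have : j = m + 1 := le_antisymm hjk h
      simp [this]

lemma pts_lt {j k : ℕ} (hjk : j < k) (hk : k ≤ P.n) : P.pts j < P.pts k := by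
  have h1 : P.pts j ≤ P.pts (k-1) := P.pts_le (by omega) (by omega)
  have h2 : P.pts (k-1) < P.pts (k-1+1) := P.pts_mono _ (by omega)
  have : k - 1 + 1 = k := by omega
  rw [this] at h2; exact lt_of_le_of_lt h1 h2

lemma pts_mem {j : ℕ} (hj : j ≤ P.n) : P.pts j ∈ Icc a b := by
  constructor
  · calc a = P.pts 0 := P.pts_zero.symm
      _ ≤ P.pts j := P.pts_le (Nat.zero_le _) hj
  · calc P.pts j ≤ P.pts P.n := P.pts_le hj le_rfl
      _ = b := P.pts_last

lemma tag_mem_Icc {j : ℕ} (hj : j < P.n) : P.tag j ∈ Icc a b := by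
  have h := P.tag_mem j hj
  exact ⟨le_trans (P.pts_mem (le_of_lt hj)).1 h.1,
    le_trans h.2 (P.pts_mem hj).2⟩

lemma a_lt_b (P : TaggedPartition a b) : a < b := by
  calc a = P.pts 0 := P.pts_zero.symm
    _ < P.pts P.n := P.pts_lt P.n_pos le_rfl
    _ = b := P.pts_last

end TaggedPartition

lemma telescope {a b : ℝ} (P : TaggedPartition a b) (F : ℝ → ℝ) :
    ∑ j ∈ Finset.range P.n, (F (P.pts (j+1)) - F (P.pts j)) = F b - F a := by
  rw [Finset.sum_range_sub (fun j => F (P.pts j)), P.pts_last, P.pts_zero]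

lemma var_nonneg (g : ℝ → ℝ) (a b : ℝ) : 0 ≤ var g a b := ENNReal.toReal_nonneg

/-- Sum of |g increments| along a monotone sequence in `[a,b]` is at most `var g a b`. -/
lemma sum_abs_le_var {g : ℝ → ℝ} {a b : ℝ} (hgbv : BoundedVariationOn g (Set.Icc a b))
    {p : ℕ} {u : ℕ → ℝ} (hu : Monotone u) (hmem : ∀ i, u i ∈ Icc a b) :
    ∑ i ∈ Finset.range p, |g (u (i+1)) - g (u i)| ≤ var g a b := by
  have h1 : ∀ x y : ℝ, |x - y| = (edist x y).toReal := by
    intro x y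
    rw [edist_dist, Real.dist_eq, ENNReal.toReal_ofReal (abs_nonneg _)]
  have h2 : ∑ i ∈ Finset.range p, |g (u (i+1)) - g (u i)|
      = (∑ i ∈ Finset.range p, edist (g (u (i+1))) (g (u i))).toReal := by
    rw [ENNReal.toReal_sum (fun i _ => edist_ne_top _ _)]
    exact Finset.sum_congr rfl fun i _ => h1 _ _
  rw [h2]
  exact ENNReal.toReal_mono hgbv (eVariationOn.sum_le (f := g) (n := p) hu hmem)

/-- Version for a partition's points. -/
lemma partition_sum_abs_le_var {g : ℝ → ℝ} {a b : ℝ}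
    (hgbv : BoundedVariationOn g (Set.Icc a b)) (P : TaggedPartition a b) :
    ∑ j ∈ Finset.range P.n, |g (P.pts (j+1)) - g (P.pts j)| ≤ var g a b := by
  have hu : Monotone (fun i => P.pts (min i P.n)) := by
    intro i j hij
    exact P.pts_le (by simp; omega) (by simp)
  have hmem : ∀ i, (fun i => P.pts (min i P.n)) i ∈ Icc a b := by
    intro i; exact P.pts_mem (by simp)
  have key := sum_abs_le_var hgbv (p := P.n) hu hmem
  refine le_trans (le_of_eq ?_) key
  apply Finset.sum_congr rfl
  intro j hj
  simp only [Finset.mem_range] at hj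
  show _ = |g (P.pts (min (j+1) P.n)) - g (P.pts (min j P.n))|
  rw [min_eq_left (by omega), min_eq_left (by omega)]

/-- Cousin's lemma: every gauge positive on `[a,b]` admits a fine tagged partition. -/
lemma cousin {a b : ℝ} (hab : a < b) (δ : ℝ → ℝ) (hδ : ∀ t ∈ Icc a b, 0 < δ t) :
    ∃ P : TaggedPartition a b, IsFine δ P := by
  -- extension operation
  have ext : ∀ x y : ℝ, x < y → y ≤ b →
      (∃ P : TaggedPartition a x, IsFine δ P) →
      (∀ τ, τ ∈ Icc x y → Icc x y ⊆ Icc (τ - δ τ) (τ + δ τ) →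
        ∃ P : TaggedPartition a y, IsFine δ P) := by
    intro x y hxy hyb ⟨P, hP⟩ τ hτ hball
    refine ⟨⟨P.n + 1, fun j => if j = P.n + 1 then y else P.pts j,
      fun j => if j = P.n then τ else P.tag j, by omega,
      ?_, ?_, ?_, ?_⟩, ?_⟩
    · simp only [if_neg (by omega : ¬ (0 = P.n + 1))]; exact P.pts_zero
    · simp
    · intro j hj
      rcases Nat.lt_or_ge j P.n with h | h
      · simp only [if_neg (by omega : ¬ j = P.n + 1), if_neg (by omega : ¬ j + 1 = P.n + 1)]
        exact P.pts_mono j h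
      · have : j = P.n := by omega
        subst this
        simp only [if_neg (by omega : ¬ P.n = P.n + 1), if_pos rfl, P.pts_last]
        exact hxy
    · intro j hj
      rcases Nat.lt_or_ge j P.n with h | h
      · simp only [if_neg (by omega : ¬ j = P.n), if_neg (by omega : ¬ j = P.n + 1),
          if_neg (by omega : ¬ j + 1 = P.n + 1)]
        exact P.tag_mem j h
      · have : j = P.n := by omega
        subst this
        simp only [if_pos rfl, if_neg (by omega : ¬ P.n = P.n + 1), P.pts_last]
        exact hτ
    · intro j hj
      simp only at hj ⊢
      rcases Nat.lt_or_ge j P.n with h | h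
      · simp only [if_neg (by omega : ¬ j = P.n), if_neg (by omega : ¬ j = P.n + 1),
          if_neg (by omega : ¬ j + 1 = P.n + 1)]
        exact hP j h
      · have : j = P.n := by omega
        subst this
        simp only [if_pos rfl, if_neg (by omega : ¬ P.n = P.n + 1), P.pts_last]
        exact hball
  set A := {x : ℝ | x ∈ Ioc a b ∧ ∃ P : TaggedPartition a x, IsFine δ P} with hA
  have hδa := hδ a ⟨le_rfl, le_of_lt hab⟩
  have one_pt : ∀ x, a < x → x ≤ b → x ≤ a + δ a → x ∈ A := by
    intro x hax hxb hxδ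
    refine mem_setOf.mpr ⟨mem_Ioc.mpr ⟨hax, hxb⟩, ⟨⟨1, fun j => if j = 0 then a else x, fun _ => a, one_pos,
      by norm_num, by norm_num, ?_, ?_⟩, ?_⟩⟩
    · intro j hj; interval_cases j; norm_num; exact hax
    · intro j hj; interval_cases j; norm_num
      first | exact le_of_lt hax | exact ⟨le_rfl, le_of_lt hax⟩
    · intro j hj; interval_cases j
      intro z hz
      norm_num at hz ⊢
      exact ⟨by linarith [hz.1, hδa], by linarith [hz.2]⟩
  have hne : A.Nonempty := by
    refine ⟨min b (a + δ a), one_pt _ (lt_min hab (by linarith)) (min_le_left _ _) (min_le_right _ _)⟩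
  have hbdd : BddAbove A := ⟨b, fun x hx => hx.1.2⟩
  set c := sSup A with hc
  clear_value c
  have hle : ∀ x ∈ A, x ≤ c := by intro x hx; rw [hc]; exact le_csSup hbdd hx
  have hcb : c ≤ b := by rw [hc]; exact csSup_le hne (fun x hx => hx.1.2)
  have hac : a < c := by
    obtain ⟨x, hx⟩ := hne
    exact lt_of_lt_of_le hx.1.1 (hle x hx)
  have hδc := hδ c ⟨le_of_lt hac, hcb⟩
  have hcA : c ∈ A := by
    obtain ⟨x, hxA, hxgt⟩ := exists_lt_of_lt_csSup hne
      (show max a (c - δ c) < sSup A by rw [← hc]; exact max_lt hac (by linarith))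
    have hxc : x ≤ c := hle x hxA
    rcases eq_or_lt_of_le hxc with h | h
    · rwa [← h]
    · refine ⟨⟨hac, hcb⟩, ?_⟩
      refine ext x c h hcb hxA.2 c ⟨le_of_lt h, le_rfl⟩ ?_
      have hx1 : c - δ c < x := lt_of_le_of_lt (le_max_right a (c - δ c)) hxgt
      intro z hz
      exact ⟨by linarith [hz.1], by linarith [hz.2]⟩
  rcases eq_or_lt_of_le hcb with h | h
  · subst h
    exact hcA.2
  · exfalso
    set y := min b (c + δ c) with hy
    have hcy : c < y := lt_min h (by linarith)
    have hyA : y ∈ A := by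
      refine ⟨⟨lt_trans hac hcy, min_le_left _ _⟩, ?_⟩
      refine ext c y hcy (min_le_left _ _) hcA.2 c ⟨le_rfl, le_of_lt hcy⟩ ?_
      intro z hz
      exact ⟨by linarith [hz.1], by linarith [hz.2, min_le_right b (c + δ c)]⟩
    have := hle y hyA
    linarith

-- PART 2: one-sided limits, approximation lemmas, RS algebra, HasKS algebra
noncomputable def glim (g : ℝ → ℝ) (a : ℝ) (t : ℝ) : ℝ :=
  if a < t then limUnder (nhdsWithin t (Set.Ico a t)) g else g t

noncomputable def grim (g : ℝ → ℝ) (b : ℝ) (t : ℝ) : ℝ :=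
  if t < b then limUnder (nhdsWithin t (Set.Ioc t b)) g else g t

lemma glim_eq_self {g : ℝ → ℝ} {a t : ℝ} (h : ¬ a < t) : glim g a t = g t := if_neg h

lemma grim_eq_self {g : ℝ → ℝ} {b t : ℝ} (h : ¬ t < b) : grim g b t = g t := if_neg h

lemma tendsto_glim {g : ℝ → ℝ} {a b : ℝ} (hg : Regulated g a b) {t : ℝ} (ht : t ∈ Ioc a b) :
    Tendsto g (nhdsWithin t (Ico a t)) (nhds (glim g a t)) := by
  obtain ⟨L, hL⟩ := hg.1 t ht
  have hne : (nhdsWithin t (Ico a t)).NeBot := by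
    apply mem_closure_iff_nhdsWithin_neBot.mp
    rw [closure_Ico (ne_of_lt ht.1)]
    exact ⟨le_of_lt ht.1, le_rfl⟩
  have : glim g a t = L := by
    rw [glim, if_pos ht.1]
    exact hL.limUnder_eq
  rw [this]; exact hL

lemma tendsto_grim {g : ℝ → ℝ} {a b : ℝ} (hg : Regulated g a b) {t : ℝ} (ht : t ∈ Ico a b) :
    Tendsto g (nhdsWithin t (Ioc t b)) (nhds (grim g b t)) := by
  obtain ⟨L, hL⟩ := hg.2 t ht
  have hne : (nhdsWithin t (Ioc t b)).NeBot := by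
    apply mem_closure_iff_nhdsWithin_neBot.mp
    rw [closure_Ioc (ne_of_lt ht.2)]
    exact ⟨le_rfl, le_of_lt ht.2⟩
  have : grim g b t = L := by
    rw [grim, if_pos ht.2]
    exact hL.limUnder_eq
  rw [this]; exact hL

/-- Near `t` from the left, `g` is close to `glim g a t`. -/
lemma left_approx {g : ℝ → ℝ} {a b : ℝ} (hg : Regulated g a b) {t : ℝ} (ht : t ∈ Ioc a b)
    {ε : ℝ} (hε : 0 < ε) :
    ∃ η > 0, ∀ u, t - η ≤ u → u < t → a ≤ u → |g u - glim g a t| ≤ ε := by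
  have h := Metric.tendsto_nhdsWithin_nhds.mp (tendsto_glim hg ht) ε hε
  obtain ⟨d, hd, hball⟩ := h
  refine ⟨d/2, by linarith, fun u h1 h2 h3 => ?_⟩
  have : dist u t < d := by rw [Real.dist_eq, abs_of_nonpos (by linarith)]; linarith
  have := hball ⟨h3, h2⟩ this
  rw [Real.dist_eq] at this
  exact le_of_lt this

lemma right_approx {g : ℝ → ℝ} {a b : ℝ} (hg : Regulated g a b) {t : ℝ} (ht : t ∈ Ico a b)
    {ε : ℝ} (hε : 0 < ε) :
    ∃ η > 0, ∀ u, t < u → u ≤ t + η → u ≤ b → |g u - grim g b t| ≤ ε := by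
  have h := Metric.tendsto_nhdsWithin_nhds.mp (tendsto_grim hg ht) ε hε
  obtain ⟨d, hd, hball⟩ := h
  refine ⟨d/2, by linarith, fun u h1 h2 h3 => ?_⟩
  have : dist u t < d := by rw [Real.dist_eq, abs_of_nonneg (by linarith)]; linarith
  have := hball ⟨h1, h3⟩ this
  rw [Real.dist_eq] at this
  exact le_of_lt this

/-- One-sided versions possibly degenerate (used at endpoints): always valid. -/
lemma left_approx' {g : ℝ → ℝ} {a b : ℝ} (hg : Regulated g a b) {t : ℝ} (ht : t ∈ Icc a b)
    {ε : ℝ} (hε : 0 < ε) :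
    ∃ η > 0, ∀ u, t - η ≤ u → u < t → a ≤ u → |g u - glim g a t| ≤ ε := by
  rcases lt_or_ge a t with h | h
  · exact left_approx hg ⟨h, ht.2⟩ hε
  · exact ⟨1, one_pos, fun u h1 h2 h3 => absurd (lt_of_le_of_lt (le_trans h h3) h2) (lt_irrefl t)⟩

lemma right_approx' {g : ℝ → ℝ} {a b : ℝ} (hg : Regulated g a b) {t : ℝ} (ht : t ∈ Icc a b)
    {ε : ℝ} (hε : 0 < ε) :
    ∃ η > 0, ∀ u, t < u → u ≤ t + η → u ≤ b → |g u - grim g b t| ≤ ε := by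
  rcases lt_or_ge t b with h | h
  · exact right_approx hg ⟨ht.1, h⟩ hε
  · exact ⟨1, one_pos, fun u h1 h2 h3 => absurd (lt_of_lt_of_le h1 (le_trans h3 h)) (lt_irrefl t)⟩

lemma RS_congr {f f' g : ℝ → ℝ} {a b : ℝ} (P : TaggedPartition a b)
    (h : ∀ x ∈ Icc a b, f x = f' x) : RS f g P = RS f' g P := by
  apply Finset.sum_congr rfl
  intro j hj
  simp only [Finset.mem_range] at hj
  rw [h _ (P.tag_mem_Icc hj)]

lemma RS_sub (f f' g : ℝ → ℝ) {a b : ℝ} (P : TaggedPartition a b) :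
    RS f g P - RS f' g P = RS (fun x => f x - f' x) g P := by
  rw [RS, RS, RS, ← Finset.sum_sub_distrib]
  apply Finset.sum_congr rfl
  intro j _
  ring

lemma abs_RS_le {g : ℝ → ℝ} {a b : ℝ} (hgbv : BoundedVariationOn g (Set.Icc a b))
    {h : ℝ → ℝ} {M : ℝ} (hM : ∀ x ∈ Icc a b, |h x| ≤ M) (P : TaggedPartition a b) :
    |RS h g P| ≤ M * var g a b := by
  calc |RS h g P| ≤ ∑ j ∈ Finset.range P.n, |h (P.tag j) * (g (P.pts (j+1)) - g (P.pts j))| :=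
        Finset.abs_sum_le_sum_abs _ _
    _ ≤ ∑ j ∈ Finset.range P.n, M * |g (P.pts (j+1)) - g (P.pts j)| := by
        apply Finset.sum_le_sum
        intro j hj
        simp only [Finset.mem_range] at hj
        rw [abs_mul]
        exact mul_le_mul_of_nonneg_right (hM _ (P.tag_mem_Icc hj)) (abs_nonneg _)
    _ = M * ∑ j ∈ Finset.range P.n, |g (P.pts (j+1)) - g (P.pts j)| := by
        rw [Finset.mul_sum]
    _ ≤ M * var g a b := by
        have hM0 : 0 ≤ M := le_trans (abs_nonneg _) (hM a ⟨le_rfl, le_of_lt P.a_lt_b⟩)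
        exact mul_le_mul_of_nonneg_left (partition_sum_abs_le_var hgbv P) hM0

/-- Combining two gauges. -/
lemma isFine_min_left {a b : ℝ} {δ1 δ2 : ℝ → ℝ} {P : TaggedPartition a b}
    (h : IsFine (fun t => min (δ1 t) (δ2 t)) P) : IsFine δ1 P := by
  intro j hj
  refine subset_trans (h j hj) (Icc_subset_Icc ?_ ?_)
  · simp only [sub_le_sub_iff_left]; exact min_le_left _ _
  · simp only [add_le_add_iff_left]; exact min_le_left _ _

lemma isFine_min_right {a b : ℝ} {δ1 δ2 : ℝ → ℝ} {P : TaggedPartition a b}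
    (h : IsFine (fun t => min (δ1 t) (δ2 t)) P) : IsFine δ2 P := by
  intro j hj
  refine subset_trans (h j hj) (Icc_subset_Icc ?_ ?_)
  · simp only [sub_le_sub_iff_left]; exact min_le_right _ _
  · simp only [add_le_add_iff_left]; exact min_le_right _ _

lemma HasKS.add {f1 f2 g : ℝ → ℝ} {a b I1 I2 : ℝ} (h1 : HasKS f1 g a b I1)
    (h2 : HasKS f2 g a b I2) : HasKS (fun x => f1 x + f2 x) g a b (I1 + I2) := by
  intro ε hε
  obtain ⟨δ1, hδ1, hP1⟩ := h1 (ε/2) (by linarith)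
  obtain ⟨δ2, hδ2, hP2⟩ := h2 (ε/2) (by linarith)
  refine ⟨fun t => min (δ1 t) (δ2 t), fun t ht => ⟨lt_min (hδ1 t ht).1 (hδ2 t ht).1,
    lt_of_le_of_lt (min_le_left _ _) (hδ1 t ht).2⟩, ?_⟩
  intro P hP
  have e1 := hP1 P (isFine_min_left hP)
  have e2 := hP2 P (isFine_min_right hP)
  have : RS (fun x => f1 x + f2 x) g P = RS f1 g P + RS f2 g P := by
    rw [RS, RS, RS, ← Finset.sum_add_distrib]
    apply Finset.sum_congr rfl
    intro j _; ring
  rw [this]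
  calc |RS f1 g P + RS f2 g P - (I1 + I2)| = |(RS f1 g P - I1) + (RS f2 g P - I2)| := by ring_nf
    _ ≤ |RS f1 g P - I1| + |RS f2 g P - I2| := abs_add_le _ _
    _ < ε := by linarith

lemma HasKS.smul {f g : ℝ → ℝ} {a b I : ℝ} (c : ℝ) (h : HasKS f g a b I) :
    HasKS (fun x => c * f x) g a b (c * I) := by
  intro ε hε
  obtain ⟨δ, hδ, hP⟩ := h (ε / (|c| + 1)) (by positivity)
  refine ⟨δ, hδ, ?_⟩
  intro P hfine
  have e := hP P hfine
  have : RS (fun x => c * f x) g P = c * RS f g P := by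
    rw [RS, RS, Finset.mul_sum]
    apply Finset.sum_congr rfl
    intro j _; ring
  rw [this]
  have : |c * RS f g P - c * I| = |c| * |RS f g P - I| := by
    rw [← abs_mul]; ring_nf
  rw [this]
  calc |c| * |RS f g P - I| ≤ |c| * (ε / (|c| + 1)) :=
        mul_le_mul_of_nonneg_left (le_of_lt e) (abs_nonneg _)
    _ < ε := by
        rw [div_eq_inv_mul, ← mul_assoc]
        have h1 : 0 < |c| + 1 := by positivity
        rw [show |c| * (|c| + 1)⁻¹ * ε = (|c| / (|c| + 1)) * ε by ring]
        have : |c| / (|c| + 1) < 1 := by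
          rw [div_lt_one h1]; linarith
        nlinarith [abs_nonneg c]

lemma HasKS.zero (g : ℝ → ℝ) (a b : ℝ) : HasKS (fun _ => (0:ℝ)) g a b 0 := by
  intro ε hε
  refine ⟨fun _ => 1/2, fun t _ => by norm_num, ?_⟩
  intro P _
  have : RS (fun _ => (0:ℝ)) g P = 0 := by
    rw [RS]; apply Finset.sum_eq_zero; intro j _; ring
  rw [this]; simpa using hε

lemma HasKS.congr {f f' g : ℝ → ℝ} {a b I : ℝ} (h : HasKS f g a b I)
    (hff' : ∀ x ∈ Icc a b, f x = f' x) : HasKS f' g a b I := by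
  intro ε hε
  obtain ⟨δ, hδ, hP⟩ := h ε hε
  exact ⟨δ, hδ, fun P hfine => by rw [← RS_congr P hff']; exact hP P hfine⟩

lemma HasKS.sum {g : ℝ → ℝ} {a b : ℝ} {m : ℕ} {s : ℕ → ℝ → ℝ} {V : ℕ → ℝ}
    (h : ∀ i < m, HasKS (s i) g a b (V i)) :
    HasKS (fun x => ∑ i ∈ Finset.range m, s i x) g a b (∑ i ∈ Finset.range m, V i) := by
  induction m with
  | zero => simpa using HasKS.zero g a b
  | succ k ih =>
    have h1 := ih (fun i hi => h i (by omega))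
    have h2 := h k (by omega)
    have := h1.add h2
    rw [Finset.sum_range_succ]
    apply this.congr
    intro x _
    rw [Finset.sum_range_succ]
-- PART 3: interval location, KS integral of indicator functions
lemma div_le {m : ℕ} {σ : ℕ → ℝ} (hmono : ∀ k < m, σ k < σ (k+1)) :
    ∀ {j k : ℕ}, j ≤ k → k ≤ m → σ j ≤ σ k := by
  intro j k hjk hk
  induction k with
  | zero => simp_all
  | succ i ih =>
    rcases Nat.lt_or_ge j (i+1) with h | h
    · exact le_trans (ih (Nat.lt_succ_iff.mp h) (le_of_lt hk)) (le_of_lt (hmono i hk))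
    · have : j = i + 1 := le_antisymm hjk h
      simp [this]

lemma exists_div_interval {m : ℕ} {σ : ℕ → ℝ} (hm : 0 < m)
    (hmono : ∀ k < m, σ k < σ (k+1)) {x : ℝ} (h1 : σ 0 ≤ x) (h2 : x ≤ σ m) :
    ∃ k < m, σ k ≤ x ∧ x ≤ σ (k+1) := by
  classical
  set p : ℕ → Prop := fun i => σ i ≤ x with hp
  set k := Nat.findGreatest p (m-1) with hk
  have hkle : k ≤ m - 1 := Nat.findGreatest_le _
  have hpk : p k := Nat.findGreatest_spec (Nat.zero_le _) h1
  refine ⟨k, by omega, hpk, ?_⟩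
  by_contra hcon
  push_neg at hcon
  rcases Nat.lt_or_ge (k+1) m with h | h
  · have : ¬ p (k+1) := Nat.findGreatest_is_greatest (Nat.lt_succ_self k) (by omega)
    exact this (le_of_lt hcon)
  · have : k + 1 = m := by omega
    rw [this] at hcon
    linarith

lemma exists_pt_interval {a b : ℝ} (P : TaggedPartition a b) {x : ℝ} (hx : x ∈ Icc a b) :
    ∃ j < P.n, P.pts j ≤ x ∧ x ≤ P.pts (j+1) := by
  apply exists_div_interval P.n_pos P.pts_mono
  · rw [P.pts_zero]; exact hx.1
  · rw [P.pts_last]; exact hx.2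

lemma sum_Ico_telescope (F : ℕ → ℝ) {m n : ℕ} (h : m ≤ n) :
    ∑ j ∈ Finset.Ico m n, (F (j+1) - F j) = F n - F m := by
  rw [Finset.sum_Ico_eq_sub _ h, Finset.sum_range_sub, Finset.sum_range_sub]
  ring

lemma KS_indicator_Ioo {g : ℝ → ℝ} {a b : ℝ} (hg : Regulated g a b)
    {c d : ℝ} (hac : a ≤ c) (hcd : c < d) (hdb : d ≤ b) :
    HasKS (fun x => if x ∈ Ioo c d then (1:ℝ) else 0) g a b (glim g a d - grim g b c) := by
  intro ε hε
  classical
  obtain ⟨ηc, hηc, hgc⟩ := right_approx hg ⟨hac, lt_of_lt_of_le hcd hdb⟩ (show (0:ℝ) < ε/4 by linarith)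
  obtain ⟨ηd, hηd, hgd⟩ := left_approx hg ⟨lt_of_le_of_lt hac hcd, hdb⟩ (show (0:ℝ) < ε/4 by linarith)
  set δ : ℝ → ℝ := fun t =>
    if t ∈ Ioo c d then min (min ((t - c)/2) ((d - t)/2)) (1/2)
    else if t = c ∨ t = d then min (min ηc ηd) (min (1/2) ((d - c)/4))
    else min (min (|t - c|/2) (|t - d|/2)) (1/2) with hδdef
  have hδIoo : ∀ t, t ∈ Ioo c d → δ t = min (min ((t - c)/2) ((d - t)/2)) (1/2) := by
    intro t ht; simp only [hδdef]; rw [if_pos ht]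
  have hδcd : ∀ t, t ∉ Ioo c d → (t = c ∨ t = d) → δ t = min (min ηc ηd) (min (1/2) ((d - c)/4)) := by
    intro t h1 h2; simp only [hδdef]; rw [if_neg h1, if_pos h2]
  have hδout : ∀ t, t ∉ Ioo c d → ¬(t = c ∨ t = d) → δ t = min (min (|t - c|/2) (|t - d|/2)) (1/2) := by
    intro t h1 h2; simp only [hδdef]; rw [if_neg h1, if_neg h2]
  refine ⟨δ, ?_, ?_⟩
  · intro t _
    rcases Classical.em (t ∈ Ioo c d) with h | h
    · rw [hδIoo t h]
      constructor
      · apply lt_min (lt_min (by simp only [mem_Ioo] at h; linarith) (by simp only [mem_Ioo] at h; linarith)) (by norm_num)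
      · exact lt_of_le_of_lt (min_le_right _ _) (by norm_num)
    · rcases Classical.em (t = c ∨ t = d) with h2 | h2
      · rw [hδcd t h h2]
        constructor
        · exact lt_min (lt_min hηc hηd) (lt_min (by norm_num) (by linarith))
        · exact lt_of_le_of_lt (le_trans (min_le_right _ _) (min_le_left _ _)) (by norm_num)
      · rw [hδout t h h2]
        push_neg at h2
        have habs1 : (0:ℝ) < |t - c| := abs_pos.mpr (sub_ne_zero.mpr h2.1)
        have habs2 : (0:ℝ) < |t - d| := abs_pos.mpr (sub_ne_zero.mpr h2.2)
        constructor
        · exact lt_min (lt_min (by linarith) (by linarith)) (by norm_num)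
        · exact lt_of_le_of_lt (min_le_right _ _) (by norm_num)
  intro P hP
  -- F1 : intervals with tags in (c,d) lie in (c,d)
  have F1 : ∀ j < P.n, P.tag j ∈ Ioo c d → c < P.pts j ∧ P.pts (j+1) < d := by
    intro j hj ht
    have hfine := hP j hj
    have h1 := (hfine ⟨le_rfl, le_of_lt (P.pts_mono j hj)⟩).1
    have h2 := (hfine ⟨le_of_lt (P.pts_mono j hj), le_rfl⟩).2
    have hδt := hδIoo _ ht
    have hle1 : δ (P.tag j) ≤ (P.tag j - c)/2 := by
      rw [hδt]; exact le_trans (min_le_left _ _) (min_le_left _ _)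
    have hle2 : δ (P.tag j) ≤ (d - P.tag j)/2 := by
      rw [hδt]; exact le_trans (min_le_left _ _) (min_le_right _ _)
    simp only [mem_Ioo] at ht
    exact ⟨by linarith, by linarith⟩
  -- the interval containing the midpoint has tag in (c,d)
  have hmidmem : (c+d)/2 ∈ Icc a b := ⟨by linarith, by linarith⟩
  obtain ⟨jm, hjm, hmem1, hmem2⟩ := exists_pt_interval P hmidmem
  have F3 : P.tag jm ∈ Ioo c d := by
    by_contra hnot
    have hfine := hP jm hjm ⟨hmem1, hmem2⟩
    have hb1 := hfine.1
    have hb2 := hfine.2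
    rcases Classical.em (P.tag jm = c ∨ P.tag jm = d) with h2 | h2
    · have hδt := hδcd _ hnot h2
      have : δ (P.tag jm) ≤ (d - c)/4 := by
        rw [hδt]; exact le_trans (min_le_right _ _) (min_le_right _ _)
      rcases h2 with h2 | h2 <;> rw [h2] at hb1 hb2 this <;> linarith
    · have hδt := hδout _ hnot h2
      push_neg at h2
      have hout : P.tag jm < c ∨ P.tag jm > d := by
        simp only [mem_Ioo, not_and_or, not_lt] at hnot
        rcases hnot with h | h
        · exact Or.inl (lt_of_le_of_ne h h2.1)
        · exact Or.inr (lt_of_le_of_ne h (Ne.symm h2.2))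
      rcases hout with h | h
      · have : δ (P.tag jm) ≤ (c - P.tag jm)/2 := by
          rw [hδt, abs_of_neg (by linarith : P.tag jm - c < 0)]
          refine le_trans (min_le_left _ _) (le_trans (min_le_left _ _) (by linarith))
        linarith
      · have : δ (P.tag jm) ≤ (P.tag jm - d)/2 := by
          rw [hδt, abs_of_pos (by linarith : (0:ℝ) < P.tag jm - d)]
          refine le_trans (min_le_left _ _) (le_trans (min_le_right _ _) (by linarith))
        linarith
  set J := (Finset.range P.n).filter (fun j => P.tag j ∈ Ioo c d) with hJ
  have hJne : J.Nonempty := ⟨jm, Finset.mem_filter.mpr ⟨Finset.mem_range.mpr hjm, F3⟩⟩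
  set j1 := J.min' hJne with hj1def
  set j2 := J.max' hJne with hj2def
  have hj1J : j1 ∈ J := J.min'_mem hJne
  have hj2J : j2 ∈ J := J.max'_mem hJne
  have hj1n : j1 < P.n := Finset.mem_range.mp (Finset.mem_filter.mp hj1J).1
  have hj2n : j2 < P.n := Finset.mem_range.mp (Finset.mem_filter.mp hj2J).1
  have hj1tag : P.tag j1 ∈ Ioo c d := (Finset.mem_filter.mp hj1J).2
  have hj2tag : P.tag j2 ∈ Ioo c d := (Finset.mem_filter.mp hj2J).2
  have hJeq : J = Finset.Ico j1 (j2+1) := by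
    apply Finset.ext
    intro j
    simp only [Finset.mem_Ico]
    constructor
    · intro hjJ
      exact ⟨J.min'_le j hjJ, Nat.lt_succ_of_le (J.le_max' j hjJ)⟩
    · rintro ⟨h1, h2⟩
      have h2' : j ≤ j2 := Nat.lt_succ_iff.mp h2
      have hjn : j < P.n := lt_of_le_of_lt h2' hj2n
      refine Finset.mem_filter.mpr ⟨Finset.mem_range.mpr hjn, ?_⟩
      constructor
      · calc c < P.pts j1 := (F1 j1 hj1n hj1tag).1
          _ ≤ P.pts j := P.pts_le h1 (le_of_lt hjn)
          _ ≤ P.tag j := (P.tag_mem j hjn).1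
      · calc P.tag j ≤ P.pts (j+1) := (P.tag_mem j hjn).2
          _ ≤ P.pts (j2+1) := P.pts_le (by omega) hj2n
          _ < d := (F1 j2 hj2n hj2tag).2
  have hRS : RS (fun x => if x ∈ Ioo c d then (1:ℝ) else 0) g P
      = ∑ j ∈ J, (g (P.pts (j+1)) - g (P.pts j)) := by
    rw [hJ, Finset.sum_filter, RS]
    apply Finset.sum_congr rfl
    intro j _
    split_ifs with h
    · ring
    · ring
  have htel : ∑ j ∈ J, (g (P.pts (j+1)) - g (P.pts j)) = g (P.pts (j2+1)) - g (P.pts j1) := by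
    rw [hJeq]
    exact sum_Ico_telescope (fun j => g (P.pts j)) (le_trans (J.min'_le j2 hj2J) (Nat.le_succ j2))
  -- left boundary
  have hcltpj1 : c < P.pts j1 := (F1 j1 hj1n hj1tag).1
  have hj1pos : 0 < j1 := by
    rcases Nat.eq_zero_or_pos j1 with h | h
    · exfalso
      have : P.pts j1 = a := by rw [h]; exact P.pts_zero
      rw [this] at hcltpj1; linarith
    · exact h
  have hsucc : j1 - 1 + 1 = j1 := by omega
  have hprevn : j1 - 1 < P.n := by omega
  have hprevtag : P.tag (j1-1) ∉ Ioo c d := by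
    intro hmem
    have : j1 - 1 ∈ J := Finset.mem_filter.mpr ⟨Finset.mem_range.mpr hprevn, hmem⟩
    have := J.min'_le _ this
    omega
  have hgleft : |g (P.pts j1) - grim g b c| ≤ ε/4 := by
    have hfine := hP (j1-1) hprevn
    have hmem : P.pts j1 ∈ Icc (P.pts (j1-1)) (P.pts (j1-1+1)) := by
      rw [hsucc]
      exact ⟨le_of_lt (by rw [← hsucc]; exact P.pts_mono _ hprevn), le_rfl⟩
    have hball := hfine hmem
    have htle : P.tag (j1-1) ≤ P.pts j1 := by
      have := (P.tag_mem _ hprevn).2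
      rwa [hsucc] at this
    have htltd : P.tag (j1-1) < d :=
      lt_of_le_of_lt htle (lt_of_le_of_lt (P.tag_mem j1 hj1n).1 hj1tag.2)
    have htlec : P.tag (j1-1) ≤ c := by
      by_contra hgt
      push_neg at hgt
      apply hprevtag
      refine ⟨hgt, lt_of_le_of_lt htle ?_⟩
      calc P.pts j1 ≤ P.tag j1 := (P.tag_mem j1 hj1n).1
        _ < d := hj1tag.2
    rcases eq_or_lt_of_le htlec with h | h
    · -- tag = c
      have hδt : δ (P.tag (j1-1)) ≤ ηc := by
        rw [hδcd _ hprevtag (Or.inl h)]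
        exact le_trans (min_le_left _ _) (min_le_left _ _)
      have hub : P.pts j1 ≤ c + ηc := by
        have := hball.2
        rw [h] at this hδt
        linarith
      exact hgc (P.pts j1) hcltpj1 hub (P.pts_mem (le_of_lt hj1n)).2
    · -- tag < c : contradiction
      exfalso
      have hnotcd : ¬ (P.tag (j1-1) = c ∨ P.tag (j1-1) = d) := by
        push_neg
        exact ⟨ne_of_lt h, ne_of_lt (lt_trans h hcd)⟩
      have hδt : δ (P.tag (j1-1)) ≤ (c - P.tag (j1-1))/2 := by
        rw [hδout _ hprevtag hnotcd, abs_of_neg (by linarith : P.tag (j1-1) - c < 0)]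
        exact le_trans (min_le_left _ _) (le_trans (min_le_left _ _) (by linarith))
      have := hball.2
      linarith
  -- right boundary
  have hpj2d : P.pts (j2+1) < d := (F1 j2 hj2n hj2tag).2
  have hj2succn : j2 + 1 < P.n := by
    rcases Nat.lt_or_ge (j2+1) P.n with h | h
    · exact h
    · exfalso
      have hj2e : j2 + 1 = P.n := by omega
      have : P.pts (j2+1) = b := by rw [hj2e]; exact P.pts_last
      rw [this] at hpj2d; linarith
  have hnexttag : P.tag (j2+1) ∉ Ioo c d := by
    intro hmem
    have : j2 + 1 ∈ J := Finset.mem_filter.mpr ⟨Finset.mem_range.mpr hj2succn, hmem⟩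
    have := J.le_max' _ this
    omega
  have hgright : |g (P.pts (j2+1)) - glim g a d| ≤ ε/4 := by
    have hfine := hP (j2+1) hj2succn
    have hmem : P.pts (j2+1) ∈ Icc (P.pts (j2+1)) (P.pts (j2+1+1)) :=
      ⟨le_rfl, le_of_lt (P.pts_mono _ hj2succn)⟩
    have hball := hfine hmem
    have htge : P.pts (j2+1) ≤ P.tag (j2+1) := (P.tag_mem _ hj2succn).1
    have hcpts : c < P.pts (j2+1) := by
      calc c < P.pts j2 := (F1 j2 hj2n hj2tag).1
        _ < P.pts (j2+1) := P.pts_mono _ hj2n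
    have htgec : d ≤ P.tag (j2+1) := by
      by_contra hlt
      push_neg at hlt
      exact hnexttag ⟨lt_of_lt_of_le hcpts htge, hlt⟩
    rcases eq_or_lt_of_le htgec with h | h
    · have hδt : δ (P.tag (j2+1)) ≤ ηd := by
        rw [hδcd _ hnexttag (Or.inr h.symm)]
        exact le_trans (min_le_left _ _) (min_le_right _ _)
      have hlb : d - ηd ≤ P.pts (j2+1) := by
        have := hball.1
        rw [← h] at this hδt
        linarith
      exact hgd (P.pts (j2+1)) hlb hpj2d (by linarith : a ≤ P.pts (j2+1))
    · exfalso
      have hnotcd : ¬ (P.tag (j2+1) = c ∨ P.tag (j2+1) = d) := by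
        push_neg
        exact ⟨ne_of_gt (lt_trans hcd h), ne_of_gt h⟩
      have hδt : δ (P.tag (j2+1)) ≤ (P.tag (j2+1) - d)/2 := by
        rw [hδout _ hnexttag hnotcd, abs_of_pos (by linarith : (0:ℝ) < P.tag (j2+1) - d)]
        exact le_trans (min_le_left _ _) (le_trans (min_le_right _ _) (by linarith))
      have := hball.1
      linarith
  rw [hRS, htel]
  have : g (P.pts (j2+1)) - g (P.pts j1) - (glim g a d - grim g b c)
      = (g (P.pts (j2+1)) - glim g a d) - (g (P.pts j1) - grim g b c) := by ring
  rw [this]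
  calc |(g (P.pts (j2+1)) - glim g a d) - (g (P.pts j1) - grim g b c)|
      ≤ |g (P.pts (j2+1)) - glim g a d| + |g (P.pts j1) - grim g b c| := abs_sub _ _
    _ ≤ ε/4 + ε/4 := add_le_add hgright hgleft
    _ < ε := by linarith
-- PART 4: KS integral of a single-point indicator
lemma KS_indicator_single {g : ℝ → ℝ} {a b : ℝ} (hab : a < b) (hg : Regulated g a b)
    {c : ℝ} (hc : c ∈ Icc a b) :
    HasKS (fun x => if x = c then (1:ℝ) else 0) g a b (grim g b c - glim g a c) := by
  intro ε hε
  classical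
  obtain ⟨ηl, hηl, hgl⟩ := left_approx' hg hc (show (0:ℝ) < ε/4 by linarith)
  obtain ⟨ηr, hηr, hgr⟩ := right_approx' hg hc (show (0:ℝ) < ε/4 by linarith)
  set δ : ℝ → ℝ := fun t => if t = c then min (min ηl ηr) (1/2) else min (|t - c|/2) (1/2)
    with hδdef
  have hδc : δ c = min (min ηl ηr) (1/2) := by simp [hδdef]
  have hδne : ∀ t, t ≠ c → δ t = min (|t - c|/2) (1/2) := by
    intro t ht; simp only [hδdef]; rw [if_neg ht]
  refine ⟨δ, ?_, ?_⟩
  · intro t _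
    rcases Classical.em (t = c) with h | h
    · rw [h, hδc]
      exact ⟨lt_min (lt_min hηl hηr) (by norm_num),
        lt_of_le_of_lt (min_le_right _ _) (by norm_num)⟩
    · rw [hδne t h]
      have : (0:ℝ) < |t - c| := abs_pos.mpr (sub_ne_zero.mpr h)
      exact ⟨lt_min (by linarith) (by norm_num),
        lt_of_le_of_lt (min_le_right _ _) (by norm_num)⟩
  intro P hP
  -- any interval containing c has tag c
  have Hforce : ∀ j < P.n, P.pts j ≤ c → c ≤ P.pts (j+1) → P.tag j = c := by
    intro j hj h1 h2
    by_contra hne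
    have hball := hP j hj ⟨h1, h2⟩
    have h0 : (0:ℝ) < |P.tag j - c| := abs_pos.mpr (sub_ne_zero.mpr hne)
    have hle : |P.tag j - c| ≤ δ (P.tag j) :=
      abs_sub_le_iff.mpr ⟨by linarith [hball.1], by linarith [hball.2]⟩
    rw [hδne _ hne] at hle
    have := le_trans hle (min_le_left _ _)
    linarith
  obtain ⟨jm, hjm, hmem1, hmem2⟩ := exists_pt_interval P hc
  have F3 : P.tag jm = c := Hforce jm hjm hmem1 hmem2
  set J := (Finset.range P.n).filter (fun j => P.tag j = c) with hJ
  have hJne : J.Nonempty := ⟨jm, Finset.mem_filter.mpr ⟨Finset.mem_range.mpr hjm, F3⟩⟩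
  set j1 := J.min' hJne with hj1def
  set j2 := J.max' hJne with hj2def
  have hj1J : j1 ∈ J := J.min'_mem hJne
  have hj2J : j2 ∈ J := J.max'_mem hJne
  have hj1n : j1 < P.n := Finset.mem_range.mp (Finset.mem_filter.mp hj1J).1
  have hj2n : j2 < P.n := Finset.mem_range.mp (Finset.mem_filter.mp hj2J).1
  have hj1tag : P.tag j1 = c := (Finset.mem_filter.mp hj1J).2
  have hj2tag : P.tag j2 = c := (Finset.mem_filter.mp hj2J).2
  have hj12 : j1 ≤ j2 := J.min'_le j2 hj2J
  have hJeq : J = Finset.Ico j1 (j2+1) := by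
    apply Finset.ext
    intro j
    simp only [Finset.mem_Ico]
    constructor
    · intro hjJ
      exact ⟨J.min'_le j hjJ, Nat.lt_succ_of_le (J.le_max' j hjJ)⟩
    · rintro ⟨h1, h2⟩
      have h2' : j ≤ j2 := Nat.lt_succ_iff.mp h2
      have hjn : j < P.n := lt_of_le_of_lt h2' hj2n
      refine Finset.mem_filter.mpr ⟨Finset.mem_range.mpr hjn, ?_⟩
      rcases eq_or_lt_of_le h1 with he | hlt1
      · rw [← he]; exact hj1tag
      rcases eq_or_lt_of_le h2' with he2 | hlt2
      · rw [he2]; exact hj2tag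
      have hle1 : c ≤ P.tag j := by
        calc c = P.tag j1 := hj1tag.symm
          _ ≤ P.pts (j1+1) := (P.tag_mem j1 hj1n).2
          _ ≤ P.pts j := P.pts_le hlt1 (le_of_lt hjn)
          _ ≤ P.tag j := (P.tag_mem j hjn).1
      have hle2 : P.tag j ≤ c := by
        calc P.tag j ≤ P.pts (j+1) := (P.tag_mem j hjn).2
          _ ≤ P.pts j2 := P.pts_le hlt2 (le_of_lt hj2n)
          _ ≤ P.tag j2 := (P.tag_mem j2 hj2n).1
          _ = c := hj2tag
      exact le_antisymm hle2 hle1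
  have hRS : RS (fun x => if x = c then (1:ℝ) else 0) g P
      = ∑ j ∈ J, (g (P.pts (j+1)) - g (P.pts j)) := by
    rw [hJ, Finset.sum_filter, RS]
    apply Finset.sum_congr rfl
    intro j _
    split_ifs with h
    · ring
    · ring
  have htel : ∑ j ∈ J, (g (P.pts (j+1)) - g (P.pts j)) = g (P.pts (j2+1)) - g (P.pts j1) := by
    rw [hJeq]
    exact sum_Ico_telescope (fun j => g (P.pts j)) (by omega)
  -- bounds on pts j1 and pts (j2+1)
  have hpj1le : P.pts j1 ≤ c := by rw [← hj1tag]; exact (P.tag_mem j1 hj1n).1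
  have hpj1ge : c - ηl ≤ P.pts j1 := by
    have hball := hP j1 hj1n ⟨le_rfl, le_of_lt (P.pts_mono j1 hj1n)⟩
    have := hball.1
    rw [hj1tag] at this
    have hδle : δ c ≤ ηl := by rw [hδc]; exact le_trans (min_le_left _ _) (min_le_left _ _)
    linarith
  have hpj2ge : c ≤ P.pts (j2+1) := by rw [← hj2tag]; exact (P.tag_mem j2 hj2n).2
  have hpj2le : P.pts (j2+1) ≤ c + ηr := by
    have hball := hP j2 hj2n ⟨le_of_lt (P.pts_mono j2 hj2n), le_rfl⟩
    have := hball.2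
    rw [hj2tag] at this
    have hδle : δ c ≤ ηr := by rw [hδc]; exact le_trans (min_le_left _ _) (min_le_right _ _)
    linarith
  have hL : |g (P.pts j1) - glim g a c| ≤ ε/4 := by
    rcases eq_or_lt_of_le hpj1le with h | h
    · -- pts j1 = c forces j1 = 0 and c = a
      have hj1z : j1 = 0 := by
        by_contra hnz
        have hj1pos : 0 < j1 := Nat.pos_of_ne_zero hnz
        have hsucc : j1 - 1 + 1 = j1 := by omega
        have hprevn : j1 - 1 < P.n := by omega
        have h1 : P.pts (j1-1) ≤ c := by
          rw [← h]
          have := le_of_lt (P.pts_mono _ hprevn)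
          rwa [hsucc] at this
        have h2 : c ≤ P.pts (j1-1+1) := by rw [hsucc, h]
        have := Hforce (j1-1) hprevn h1 h2
        have hmemJ : j1 - 1 ∈ J := Finset.mem_filter.mpr ⟨Finset.mem_range.mpr hprevn, this⟩
        have := J.min'_le _ hmemJ
        omega
      have hca : c = a := by rw [← h, hj1z]; exact P.pts_zero
      have : glim g a c = g c := glim_eq_self (by rw [hca]; exact lt_irrefl a)
      rw [h, this]
      simp only [sub_self, abs_zero]
      linarith
    · have haleq : a ≤ P.pts j1 := (P.pts_mem (le_of_lt hj1n)).1
      exact hgl (P.pts j1) hpj1ge h haleq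
  have hR : |g (P.pts (j2+1)) - grim g b c| ≤ ε/4 := by
    rcases eq_or_lt_of_le hpj2ge with h | h
    · -- c = pts (j2+1) forces j2+1 = n and c = b
      have hj2e : j2 + 1 = P.n := by
        by_contra hne
        have hnextn : j2 + 1 < P.n := lt_of_le_of_ne hj2n hne
        have h1 : P.pts (j2+1) ≤ c := le_of_eq h.symm
        have h2 : c ≤ P.pts (j2+1+1) := by
          rw [h]; exact le_of_lt (P.pts_mono _ hnextn)
        have := Hforce (j2+1) hnextn h1 h2
        have hmemJ : j2 + 1 ∈ J := Finset.mem_filter.mpr ⟨Finset.mem_range.mpr hnextn, this⟩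
        have := J.le_max' _ hmemJ
        omega
      have hcb : c = b := by rw [h, hj2e]; exact P.pts_last
      have : grim g b c = g c := grim_eq_self (by rw [hcb]; exact lt_irrefl b)
      rw [← h, this]
      simp only [sub_self, abs_zero]
      linarith
    · have hleb : P.pts (j2+1) ≤ b := (P.pts_mem hj2n).2
      exact hgr (P.pts (j2+1)) h hpj2le hleb
  rw [hRS, htel]
  have heq : g (P.pts (j2+1)) - g (P.pts j1) - (grim g b c - glim g a c)
      = (g (P.pts (j2+1)) - grim g b c) - (g (P.pts j1) - glim g a c) := by ring
  rw [heq]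
  calc |(g (P.pts (j2+1)) - grim g b c) - (g (P.pts j1) - glim g a c)|
      ≤ |g (P.pts (j2+1)) - grim g b c| + |g (P.pts j1) - glim g a c| := abs_sub _ _
    _ ≤ ε/4 + ε/4 := add_le_add hR hL
    _ < ε := by linarith
-- PART 5: divisions adapted to a regulated function; step approximation; KS existence
lemma osc_of_two {f : ℝ → ℝ} {ε : ℝ} (L : ℝ) (S : Set ℝ) (h : ∀ u ∈ S, |f u - L| ≤ ε/2) :
    ∀ u ∈ S, ∀ v ∈ S, |f u - f v| ≤ ε := by
  intro u hu v hv
  calc |f u - f v| = |(f u - L) - (f v - L)| := by ring_nf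
    _ ≤ |f u - L| + |f v - L| := abs_sub _ _
    _ ≤ ε := by linarith [h u hu, h v hv]

lemma regulated_division {f : ℝ → ℝ} {a b : ℝ} (hf : Regulated f a b) (hab : a < b)
    {ε : ℝ} (hε : 0 < ε) :
    ∃ (m : ℕ) (σ : ℕ → ℝ), 0 < m ∧ σ 0 = a ∧ σ m = b ∧ (∀ k < m, σ k < σ (k+1)) ∧
      (∀ k < m, ∀ x ∈ Ioo (σ k) (σ (k+1)), ∀ y ∈ Ioo (σ k) (σ (k+1)), |f x - f y| ≤ ε) := by
  set Good : ℝ → Prop := fun z => ∃ (m : ℕ) (σ : ℕ → ℝ), 0 < m ∧ σ 0 = a ∧ σ m = z ∧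
    (∀ k < m, σ k < σ (k+1)) ∧
    (∀ k < m, ∀ x ∈ Ioo (σ k) (σ (k+1)), ∀ y ∈ Ioo (σ k) (σ (k+1)), |f x - f y| ≤ ε) with hGood
  have ext : ∀ x y : ℝ, x < y → Good x →
      (∀ u ∈ Ioo x y, ∀ v ∈ Ioo x y, |f u - f v| ≤ ε) → Good y := by
    rintro x y hxy ⟨m, σ, hm, h0, hl, hmono, hosc⟩ hoscxy
    refine ⟨m+1, fun k => if k = m+1 then y else σ k, by omega, ?_, by simp, ?_, ?_⟩
    · simp only [if_neg (by omega : ¬ (0 = m+1))]; exact h0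
    · intro k hk
      rcases Nat.lt_or_ge k m with h | h
      · simp only [if_neg (by omega : ¬ k = m+1), if_neg (by omega : ¬ k+1 = m+1)]
        exact hmono k h
      · have hkm : k = m := by omega
        subst hkm
        simp only [if_neg (by omega : ¬ k = k+1), if_pos rfl, hl]
        exact hxy
    · intro k hk
      rcases Nat.lt_or_ge k m with h | h
      · simp only [if_neg (by omega : ¬ k = m+1), if_neg (by omega : ¬ k+1 = m+1)]
        exact hosc k h
      · have hkm : k = m := by omega
        subst hkm
        simp only [if_neg (by omega : ¬ k = k+1), if_pos rfl, hl]
        exact hoscxy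
  set A := {x : ℝ | x ∈ Ioc a b ∧ Good x} with hA
  have hne : A.Nonempty := by
    obtain ⟨η, hη, happ⟩ := right_approx' hf ⟨le_rfl, le_of_lt hab⟩ (half_pos hε)
    set x0 := min b (a + η) with hx0
    have hax0 : a < x0 := lt_min hab (by linarith)
    refine ⟨x0, ⟨hax0, min_le_left _ _⟩, 1, fun k => if k = 0 then a else x0, one_pos,
      by norm_num, by norm_num, ?_, ?_⟩
    · intro k hk; interval_cases k; norm_num; exact hax0
    · intro k hk; interval_cases k
      norm_num
      intro u hu1 hu2 v hv1 hv2
      have b1 := happ u hu1 (le_trans (le_of_lt hu2) (min_le_right _ _))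
        (le_trans (le_of_lt hu2) (min_le_left _ _))
      have b2 := happ v hv1 (le_trans (le_of_lt hv2) (min_le_right _ _))
        (le_trans (le_of_lt hv2) (min_le_left _ _))
      calc |f u - f v| = |(f u - grim f b a) - (f v - grim f b a)| := by ring_nf
        _ ≤ |f u - grim f b a| + |f v - grim f b a| := abs_sub _ _
        _ ≤ ε := by linarith
  have hbdd : BddAbove A := ⟨b, fun x hx => hx.1.2⟩
  set c := sSup A with hc
  clear_value c
  have hle : ∀ x ∈ A, x ≤ c := fun x hx => by rw [hc]; exact le_csSup hbdd hx
  have hcb : c ≤ b := by rw [hc]; exact csSup_le hne fun x hx => hx.1.2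
  have hac : a < c := by
    obtain ⟨x, hx⟩ := hne
    exact lt_of_lt_of_le hx.1.1 (hle x hx)
  have hGc : Good c := by
    obtain ⟨η, hη, happL⟩ := left_approx hf ⟨hac, hcb⟩ (half_pos hε)
    obtain ⟨x, hxA, hxgt⟩ := exists_lt_of_lt_csSup hne
      (show max a (c - η) < sSup A by rw [← hc]; exact max_lt hac (by linarith))
    rcases eq_or_lt_of_le (hle x hxA) with h | h
    · rw [← h]; exact hxA.2
    · refine ext x c h hxA.2 ?_
      apply osc_of_two (glim f a c) (Ioo x c)
      intro u hu
      have h1 : c - η ≤ u := le_of_lt (lt_trans (lt_of_le_of_lt (le_max_right a (c - η)) hxgt) hu.1)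
      have h2 : a ≤ u := le_of_lt (lt_trans (lt_of_le_of_lt (le_max_left a (c - η)) hxgt) hu.1)
      exact happL u h1 hu.2 h2
  rcases eq_or_lt_of_le hcb with hcb' | hlt
  · rw [← hcb']; exact hGc
  · exfalso
    obtain ⟨η, hη, happR⟩ := right_approx hf ⟨le_of_lt hac, hlt⟩ (half_pos hε)
    set y := min b (c + η) with hy
    have hcy : c < y := lt_min hlt (by linarith)
    have hyA : y ∈ A := by
      refine ⟨⟨lt_trans hac hcy, min_le_left _ _⟩, ?_⟩
      refine ext c y hcy hGc ?_
      apply osc_of_two (grim f b c) (Ioo c y)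
      intro u hu
      exact happR u hu.1 (le_trans (le_of_lt hu.2) (min_le_right _ _))
        (le_trans (le_of_lt hu.2) (min_le_left _ _))
    have := hle y hyA
    linarith

lemma regulated_bounded {f : ℝ → ℝ} {a b : ℝ} (hf : Regulated f a b) (hab : a < b) :
    ∃ M : ℝ, 0 ≤ M ∧ ∀ x ∈ Icc a b, |f x| ≤ M := by
  obtain ⟨m, σ, hm, h0, hl, hmono, hosc⟩ := regulated_division hf hab one_pos
  have hne : (Finset.range (m+1)).Nonempty := ⟨0, by simp⟩
  set M0 := (Finset.range (m+1)).sup' hne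
    (fun k => max (|f (σ k)|) (|f ((σ k + σ (k+1))/2)|)) with hM0
  have hsup : ∀ k, k ≤ m → max (|f (σ k)|) (|f ((σ k + σ (k+1))/2)|) ≤ M0 := by
    intro k hk
    rw [hM0]
    exact Finset.le_sup' (fun k => max (|f (σ k)|) (|f ((σ k + σ (k+1))/2)|))
      (Finset.mem_range.mpr (by omega))
  refine ⟨M0 + 1, ?_, ?_⟩
  · have h1 : |f (σ 0)| ≤ M0 := le_trans (le_max_left _ _) (hsup 0 (by omega))
    have := abs_nonneg (f (σ 0))
    linarith
  · intro x hx
    classical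
    obtain ⟨k, hk, hk1, hk2⟩ := exists_div_interval hm hmono (h0 ▸ hx.1) (hl ▸ hx.2)
    rcases eq_or_lt_of_le hk1 with h | h
    · have : |f x| ≤ M0 := by
        rw [← h]
        exact le_trans (le_max_left _ _) (hsup k (by omega))
      linarith
    rcases eq_or_lt_of_le hk2 with h2 | h2
    · have : |f x| ≤ M0 := by
        rw [h2]
        exact le_trans (le_max_left _ _) (hsup (k+1) (by omega))
      linarith
    · have hmid : (σ k + σ (k+1))/2 ∈ Ioo (σ k) (σ (k+1)) := by
        constructor <;> [linarith [hmono k hk]; linarith [hmono k hk]]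
      have h1 : |f x - f ((σ k + σ (k+1))/2)| ≤ 1 := hosc k hk x ⟨h, h2⟩ _ hmid
      have h2' : |f ((σ k + σ (k+1))/2)| ≤ M0 :=
        le_trans (le_max_right _ _) (hsup k (by omega))
      calc |f x| = |(f x - f ((σ k + σ (k+1))/2)) + f ((σ k + σ (k+1))/2)| := by ring_nf
        _ ≤ |f x - f ((σ k + σ (k+1))/2)| + |f ((σ k + σ (k+1))/2)| := abs_add_le _ _
        _ ≤ M0 + 1 := by linarith

noncomputable def stepOf (f : ℝ → ℝ) (m : ℕ) (σ : ℕ → ℝ) : ℝ → ℝ := fun x =>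
  (∑ k ∈ Finset.range m, f ((σ k + σ (k+1))/2) * (if x ∈ Ioo (σ k) (σ (k+1)) then (1:ℝ) else 0))
  + ∑ k ∈ Finset.range (m+1), f (σ k) * (if x = σ k then (1:ℝ) else 0)

lemma stepOf_hasKS {f g : ℝ → ℝ} {a b : ℝ} (hab : a < b) (hg : Regulated g a b)
    {m : ℕ} {σ : ℕ → ℝ} (hm : 0 < m) (h0 : σ 0 = a) (hl : σ m = b)
    (hmono : ∀ k < m, σ k < σ (k+1)) :
    ∃ V, HasKS (stepOf f m σ) g a b V := by
  have hσmem : ∀ k ≤ m, σ k ∈ Icc a b := by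
    intro k hk
    exact ⟨h0 ▸ div_le hmono (Nat.zero_le k) hk, hl ▸ div_le hmono hk le_rfl⟩
  have H1 : ∀ k < m, HasKS (fun x => f ((σ k + σ (k+1))/2) *
      (if x ∈ Ioo (σ k) (σ (k+1)) then (1:ℝ) else 0)) g a b
      (f ((σ k + σ (k+1))/2) * (glim g a (σ (k+1)) - grim g b (σ k))) := by
    intro k hk
    exact (KS_indicator_Ioo hg (hσmem k (le_of_lt hk)).1 (hmono k hk)
      (hσmem (k+1) hk).2).smul _
  have H2 : ∀ k < m+1, HasKS (fun x => f (σ k) * (if x = σ k then (1:ℝ) else 0)) g a b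
      (f (σ k) * (grim g b (σ k) - glim g a (σ k))) := by
    intro k hk
    exact (KS_indicator_single hab hg (hσmem k (by omega))).smul _
  have hsum1 := HasKS.sum H1
  have hsum2 := HasKS.sum H2
  refine ⟨_, (hsum1.add hsum2).congr ?_⟩
  intro x _
  rfl

lemma stepOf_approx {f : ℝ → ℝ} {a b ε : ℝ} (hab : a < b) (hε : 0 ≤ ε)
    {m : ℕ} {σ : ℕ → ℝ} (hm : 0 < m) (h0 : σ 0 = a) (hl : σ m = b)
    (hmono : ∀ k < m, σ k < σ (k+1))
    (hosc : ∀ k < m, ∀ x ∈ Ioo (σ k) (σ (k+1)), ∀ y ∈ Ioo (σ k) (σ (k+1)), |f x - f y| ≤ ε) :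
    ∀ x ∈ Icc a b, |f x - stepOf f m σ x| ≤ ε := by
  intro x hx
  classical
  have hdisj : ∀ i k, i < m → k < m → i ≠ k → x ∈ Ioo (σ i) (σ (i+1)) →
      x ∉ Ioo (σ k) (σ (k+1)) := by
    intro i k hi hk hik hxi hxk
    rcases Nat.lt_or_ge i k with h | h
    · have : σ (i+1) ≤ σ k := div_le hmono h (le_of_lt hk)
      exact absurd (lt_of_lt_of_le hxi.2 this) (not_lt.mpr (le_of_lt hxk.1))
    · have hki : k < i := by omega
      have : σ (k+1) ≤ σ i := div_le hmono hki (le_of_lt hi)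
      exact absurd (lt_of_lt_of_le hxk.2 this) (not_lt.mpr (le_of_lt hxi.1))
  by_cases hxσ : ∃ k ≤ m, x = σ k
  · obtain ⟨k, hk, hkx⟩ := hxσ
    have hstep : stepOf f m σ x = f (σ k) := by
      rw [stepOf]
      have hz1 : ∑ i ∈ Finset.range m, f ((σ i + σ (i+1))/2) *
          (if x ∈ Ioo (σ i) (σ (i+1)) then (1:ℝ) else 0) = 0 := by
        apply Finset.sum_eq_zero
        intro i hi
        simp only [Finset.mem_range] at hi
        rw [if_neg, mul_zero]
        intro hmem
        rw [hkx] at hmem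
        rcases Nat.lt_or_ge k (i+1) with h | h
        · have hik : k ≤ i := by omega
          exact absurd (lt_of_le_of_lt (div_le hmono hik (le_of_lt hi)) hmem.1) (lt_irrefl _)
        · exact absurd (lt_of_lt_of_le hmem.2 (div_le hmono h hk)) (lt_irrefl _)
      have hz2 : ∑ i ∈ Finset.range (m+1), f (σ i) * (if x = σ i then (1:ℝ) else 0)
          = f (σ k) := by
        rw [Finset.sum_eq_single_of_mem k (by simp; omega)]
        · rw [if_pos hkx, mul_one]
        · intro i hi hik
          simp only [Finset.mem_range] at hi
          rw [if_neg, mul_zero]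
          intro hxi
          have : σ k = σ i := by rw [← hkx, hxi]
          rcases Nat.lt_or_ge k i with h | h
          · have := lt_of_lt_of_le (hmono k (by omega)) (div_le hmono h (by omega))
            linarith
          · have hik' : i < k := by omega
            have := lt_of_lt_of_le (hmono i (by omega)) (div_le hmono hik' hk)
            linarith
      rw [hz1, hz2, zero_add]
    rw [hstep, hkx]
    simp only [sub_self, abs_zero]
    exact hε
  · push_neg at hxσ
    obtain ⟨k, hk, hk1, hk2⟩ := exists_div_interval hm hmono (h0 ▸ hx.1) (hl ▸ hx.2)
    have hx1 : σ k < x := lt_of_le_of_ne hk1 (fun h => hxσ k (le_of_lt hk) h.symm)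
    have hx2 : x < σ (k+1) := lt_of_le_of_ne hk2 (hxσ (k+1) hk)
    have hstep : stepOf f m σ x = f ((σ k + σ (k+1))/2) := by
      rw [stepOf]
      have hz2 : ∑ i ∈ Finset.range (m+1), f (σ i) * (if x = σ i then (1:ℝ) else 0) = 0 := by
        apply Finset.sum_eq_zero
        intro i hi
        simp only [Finset.mem_range] at hi
        rw [if_neg (hxσ i (by omega)), mul_zero]
      have hz1 : ∑ i ∈ Finset.range m, f ((σ i + σ (i+1))/2) *
          (if x ∈ Ioo (σ i) (σ (i+1)) then (1:ℝ) else 0) = f ((σ k + σ (k+1))/2) := by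
        rw [Finset.sum_eq_single_of_mem k (by simp; omega)]
        · rw [if_pos ⟨hx1, hx2⟩, mul_one]
        · intro i hi hik
          simp only [Finset.mem_range] at hi
          rw [if_neg (fun hmem => hdisj k i hk hi (Ne.symm hik) ⟨hx1, hx2⟩ hmem), mul_zero]
      rw [hz1, hz2, add_zero]
    rw [hstep]
    have hmid : (σ k + σ (k+1))/2 ∈ Ioo (σ k) (σ (k+1)) := by
      constructor <;> [linarith [hmono k hk]; linarith [hmono k hk]]
    exact hosc k hk x ⟨hx1, hx2⟩ _ hmid

/-- Two KS integrals of uniformly close functions are close. -/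
lemma hasKS_dist {g : ℝ → ℝ} {a b : ℝ} (hab : a < b)
    (hgbv : BoundedVariationOn g (Set.Icc a b)) {s1 s2 : ℝ → ℝ} {V1 V2 c : ℝ}
    (h1 : HasKS s1 g a b V1) (h2 : HasKS s2 g a b V2)
    (hc : ∀ x ∈ Icc a b, |s1 x - s2 x| ≤ c) : |V1 - V2| ≤ c * var g a b := by
  apply le_of_forall_pos_le_add
  intro ε hε
  obtain ⟨δ1, hδ1, hP1⟩ := h1 (ε/2) (by linarith)
  obtain ⟨δ2, hδ2, hP2⟩ := h2 (ε/2) (by linarith)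
  obtain ⟨P, hP⟩ := cousin hab (fun t => min (δ1 t) (δ2 t))
    (fun t ht => lt_min (hδ1 t ht).1 (hδ2 t ht).1)
  have e1 := hP1 P (isFine_min_left hP)
  have e2 := hP2 P (isFine_min_right hP)
  have e3 : |RS s1 g P - RS s2 g P| ≤ c * var g a b := by
    rw [RS_sub]
    exact abs_RS_le hgbv hc P
  calc |V1 - V2| = |(RS s1 g P - V2) - (RS s1 g P - V1)| := by ring_nf
    _ ≤ |RS s1 g P - V2| + |RS s1 g P - V1| := abs_sub _ _
    _ ≤ (|RS s1 g P - RS s2 g P| + |RS s2 g P - V2|) + |RS s1 g P - V1| := by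
        have : |RS s1 g P - V2| ≤ |RS s1 g P - RS s2 g P| + |RS s2 g P - V2| := by
          calc |RS s1 g P - V2| = |(RS s1 g P - RS s2 g P) + (RS s2 g P - V2)| := by ring_nf
            _ ≤ _ := abs_add_le _ _
        linarith
    _ ≤ c * var g a b + ε := by linarith
-- PART 6: existence of the KS integral
lemma KS_exists {f g : ℝ → ℝ} {a b : ℝ} (hab : a < b) (hf : Regulated f a b)
    (hg : Regulated g a b) (hgbv : BoundedVariationOn g (Set.Icc a b)) :
    ∃ K, HasKS f g a b K := by
  have H : ∀ n : ℕ, ∃ sV : (ℝ → ℝ) × ℝ, HasKS sV.1 g a b sV.2 ∧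
      ∀ x ∈ Icc a b, |f x - sV.1 x| ≤ 1/((n:ℝ)+1) := by
    intro n
    obtain ⟨m, σ, hm, h0, hl, hmono, hosc⟩ := regulated_division hf hab
      (show (0:ℝ) < 1/((n:ℝ)+1) by positivity)
    obtain ⟨V, hV⟩ := stepOf_hasKS (f := f) hab hg hm h0 hl hmono
    exact ⟨(stepOf f m σ, V), hV, stepOf_approx hab (by positivity) hm h0 hl hmono hosc⟩
  choose sV hKS happ using H
  have hvar0 : 0 ≤ var g a b := var_nonneg g a b
  have hdist : ∀ n m : ℕ, |(sV n).2 - (sV m).2| ≤ (1/((n:ℝ)+1) + 1/((m:ℝ)+1)) * var g a b := by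
    intro n m
    apply hasKS_dist hab hgbv (hKS n) (hKS m)
    intro x hx
    calc |(sV n).1 x - (sV m).1 x| = |(f x - (sV m).1 x) - (f x - (sV n).1 x)| := by ring_nf
      _ ≤ |f x - (sV m).1 x| + |f x - (sV n).1 x| := abs_sub _ _
      _ ≤ 1/((m:ℝ)+1) + 1/((n:ℝ)+1) := add_le_add (happ m x hx) (happ n x hx)
      _ = 1/((n:ℝ)+1) + 1/((m:ℝ)+1) := by ring
  have t1 : Tendsto (fun n : ℕ => 1/((n:ℝ)+1) * (2 * var g a b)) atTop (nhds 0) := by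
    have := tendsto_one_div_add_atTop_nhds_zero_nat.mul_const (2 * var g a b)
    simpa using this
  have hcauchy : CauchySeq (fun n => (sV n).2) := by
    apply cauchySeq_of_le_tendsto_0 (b := fun N : ℕ => 1/((N:ℝ)+1) * (2 * var g a b)) _ t1
    intro n m N hn hm
    rw [Real.dist_eq]
    refine le_trans (hdist n m) ?_
    have h1 : 1/((n:ℝ)+1) ≤ 1/((N:ℝ)+1) := by
      apply one_div_le_one_div_of_le (by positivity)
      have : (N:ℝ) ≤ (n:ℝ) := by exact_mod_cast hn
      linarith
    have h2 : 1/((m:ℝ)+1) ≤ 1/((N:ℝ)+1) := by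
      apply one_div_le_one_div_of_le (by positivity)
      have : (N:ℝ) ≤ (m:ℝ) := by exact_mod_cast hm
      linarith
    have : 1/((n:ℝ)+1) + 1/((m:ℝ)+1) ≤ 1/((N:ℝ)+1) * 2 := by linarith
    calc (1/((n:ℝ)+1) + 1/((m:ℝ)+1)) * var g a b ≤ (1/((N:ℝ)+1) * 2) * var g a b :=
          mul_le_mul_of_nonneg_right this hvar0
      _ = 1/((N:ℝ)+1) * (2 * var g a b) := by ring
  obtain ⟨K, hK⟩ := cauchySeq_tendsto_of_complete hcauchy
  refine ⟨K, ?_⟩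
  intro ε hε
  have t2 : Tendsto (fun n : ℕ => 1/((n:ℝ)+1) * var g a b) atTop (nhds 0) := by
    have := tendsto_one_div_add_atTop_nhds_zero_nat.mul_const (var g a b)
    simpa using this
  have e1 : ∀ᶠ n : ℕ in atTop, 1/((n:ℝ)+1) * var g a b < ε/4 :=
    t2.eventually_lt_const (by linarith)
  have e2 : ∀ᶠ n : ℕ in atTop, |(sV n).2 - K| < ε/4 := by
    have := Metric.tendsto_atTop.mp hK (ε/4) (by linarith)
    obtain ⟨N, hN⟩ := this
    refine eventually_atTop.mpr ⟨N, fun n hn => ?_⟩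
    have := hN n hn
    rwa [Real.dist_eq] at this
  obtain ⟨n, hn1, hn2⟩ := (e1.and e2).exists
  obtain ⟨δ, hδ, hP⟩ := hKS n (ε/4) (by linarith)
  refine ⟨δ, hδ, ?_⟩
  intro P hfine
  have h1 := hP P hfine
  have h2 : |RS f g P - RS (sV n).1 g P| ≤ 1/((n:ℝ)+1) * var g a b := by
    rw [RS_sub]
    exact abs_RS_le hgbv (fun x hx => happ n x hx) P
  calc |RS f g P - K| = |(RS f g P - RS (sV n).1 g P) + (RS (sV n).1 g P - (sV n).2)
        + ((sV n).2 - K)| := by ring_nf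
    _ ≤ |(RS f g P - RS (sV n).1 g P) + (RS (sV n).1 g P - (sV n).2)| + |(sV n).2 - K| :=
        abs_add_le _ _
    _ ≤ |RS f g P - RS (sV n).1 g P| + |RS (sV n).1 g P - (sV n).2| + |(sV n).2 - K| := by
        linarith [abs_add_le (RS f g P - RS (sV n).1 g P) (RS (sV n).1 g P - (sV n).2)]
    _ < ε := by linarith
-- PART 7: the U-sum and its basic properties
noncomputable def Usum (f g : ℝ → ℝ) {a b : ℝ} (P : TaggedPartition a b) : ℝ :=
  ∑ k ∈ Finset.range P.n,
    (f (P.pts k) * (g (P.tag k) - g (P.pts k))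
      + f (P.pts (k+1)) * (g (P.pts (k+1)) - g (P.tag k)))

lemma RS_eq_C_sub_Usum (f g : ℝ → ℝ) {a b : ℝ} (P : TaggedPartition a b) :
    RS g f P = (f b * g b - f a * g a) - Usum f g P := by
  have htel : ∑ k ∈ Finset.range P.n,
      (f (P.pts (k+1)) * g (P.pts (k+1)) - f (P.pts k) * g (P.pts k))
      = f b * g b - f a * g a := by
    rw [Finset.sum_range_sub (fun k => f (P.pts k) * g (P.pts k)), P.pts_last, P.pts_zero]
  have : RS g f P = ∑ k ∈ Finset.range P.n,
      ((f (P.pts (k+1)) * g (P.pts (k+1)) - f (P.pts k) * g (P.pts k))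
        - (f (P.pts k) * (g (P.tag k) - g (P.pts k))
          + f (P.pts (k+1)) * (g (P.pts (k+1)) - g (P.tag k)))) := by
    rw [RS]
    apply Finset.sum_congr rfl
    intro k _
    ring
  rw [this, Finset.sum_sub_distrib, htel, Usum]

lemma Usum_sub (f s g : ℝ → ℝ) {a b : ℝ} (P : TaggedPartition a b) :
    Usum f g P - Usum s g P = Usum (fun x => f x - s x) g P := by
  rw [Usum, Usum, Usum, ← Finset.sum_sub_distrib]
  apply Finset.sum_congr rfl
  intro k _
  ring

lemma sum_range_two_mul (F : ℕ → ℝ) (n : ℕ) :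
    ∑ i ∈ Finset.range (2*n), F i = ∑ k ∈ Finset.range n, (F (2*k) + F (2*k+1)) := by
  induction n with
  | zero => simp
  | succ p ih =>
    have h : 2*(p+1) = (2*p) + 1 + 1 := by ring
    rw [h, Finset.sum_range_succ, Finset.sum_range_succ, ih, Finset.sum_range_succ]
    ring

/-- The interleaved modulus bound for U-sums. -/
lemma abs_Usum_le {g : ℝ → ℝ} {a b : ℝ} (hgbv : BoundedVariationOn g (Set.Icc a b))
    {h : ℝ → ℝ} {M : ℝ} (hM : ∀ x ∈ Icc a b, |h x| ≤ M) (P : TaggedPartition a b) :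
    |Usum h g P| ≤ M * var g a b := by
  have hM0 : 0 ≤ M := le_trans (abs_nonneg _) (hM a ⟨le_rfl, le_of_lt P.a_lt_b⟩)
  set w : ℕ → ℝ := fun i =>
    if i ≤ 2*P.n then (if i % 2 = 0 then P.pts (i/2) else P.tag (i/2)) else b with hw
  have hwval0 : ∀ k ≤ P.n, w (2*k) = P.pts k := by
    intro k hk
    simp only [hw]
    rw [if_pos (by omega), if_pos (by omega), Nat.mul_div_cancel_left k (by norm_num)]
  have hwval1 : ∀ k < P.n, w (2*k+1) = P.tag k := by
    intro k hk
    simp only [hw]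
    rw [if_pos (by omega), if_neg (by omega)]
    congr 1
    omega
  have hwmono : Monotone w := by
    apply monotone_nat_of_le_succ
    intro i
    rcases Nat.lt_or_ge i (2*P.n) with hi | hi
    · rcases Nat.even_or_odd i with ⟨k, hk⟩ | ⟨k, hk⟩
      · have hkn : k < P.n := by omega
        have e1 : w i = P.pts k := by rw [hk, show k + k = 2*k by ring]; exact hwval0 k (by omega)
        have e2 : w (i+1) = P.tag k := by
          rw [hk, show k + k + 1 = 2*k+1 by ring]; exact hwval1 k hkn
        rw [e1, e2]; exact (P.tag_mem k hkn).1
      · have hkn : k < P.n := by omega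
        have e1 : w i = P.tag k := by rw [hk, show 2*k + 1 = 2*k+1 by ring]; exact hwval1 k hkn
        have e2 : w (i+1) = P.pts (k+1) := by
          rw [hk, show 2*k + 1 + 1 = 2*(k+1) by ring]; exact hwval0 (k+1) hkn
        rw [e1, e2]; exact (P.tag_mem k hkn).2
    · rcases Nat.lt_or_ge (2*P.n) (i+1) with h2 | h2
      · have e2 : w (i+1) = b := by simp only [hw]; rw [if_neg (by omega)]
        rw [e2]
        simp only [hw]
        split_ifs with h3 h4
        · have : i = 2*P.n := by omega
          rw [this] at h4 ⊢
          rw [Nat.mul_div_cancel_left _ (by norm_num : 0 < 2)]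
          exact le_of_eq P.pts_last
        · have : i = 2*P.n := by omega
          omega
        · exact le_rfl
      · omega
  have hwmem : ∀ i, w i ∈ Icc a b := by
    intro i
    simp only [hw]
    split_ifs with h1 h2
    · exact P.pts_mem (by omega)
    · exact P.tag_mem_Icc (by omega)
    · exact ⟨le_of_lt (P.a_lt_b), le_rfl⟩
  have hvar := sum_abs_le_var hgbv (p := 2*P.n) hwmono hwmem
  rw [sum_range_two_mul (fun i => |g (w (i+1)) - g (w i)|) P.n] at hvar
  calc |Usum h g P| ≤ ∑ k ∈ Finset.range P.n,
        (|h (P.pts k) * (g (P.tag k) - g (P.pts k))|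
          + |h (P.pts (k+1)) * (g (P.pts (k+1)) - g (P.tag k))|) := by
        refine le_trans (Finset.abs_sum_le_sum_abs _ _) (Finset.sum_le_sum fun k _ => abs_add_le _ _)
    _ ≤ ∑ k ∈ Finset.range P.n,
        (M * |g (P.tag k) - g (P.pts k)| + M * |g (P.pts (k+1)) - g (P.tag k)|) := by
        apply Finset.sum_le_sum
        intro k hk
        simp only [Finset.mem_range] at hk
        have b1 : |h (P.pts k)| ≤ M := hM _ (P.pts_mem (by omega))
        have b2 : |h (P.pts (k+1))| ≤ M := hM _ (P.pts_mem (by omega))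
        rw [abs_mul, abs_mul]
        exact add_le_add (mul_le_mul_of_nonneg_right b1 (abs_nonneg _))
          (mul_le_mul_of_nonneg_right b2 (abs_nonneg _))
    _ = M * ∑ k ∈ Finset.range P.n,
        (|g (P.tag k) - g (P.pts k)| + |g (P.pts (k+1)) - g (P.tag k)|) := by
        rw [Finset.mul_sum]; apply Finset.sum_congr rfl; intro k _; ring
    _ ≤ M * var g a b := by
        apply mul_le_mul_of_nonneg_left _ hM0
        refine le_trans (le_of_eq ?_) hvar
        apply Finset.sum_congr rfl
        intro k hk
        simp only [Finset.mem_range] at hk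
        have e0 : w (2*k) = P.pts k := hwval0 k (by omega)
        have e1 : w (2*k+1) = P.tag k := hwval1 k hk
        have e2 : w (2*k+1+1) = P.pts (k+1) := by
          rw [show 2*k+1+1 = 2*(k+1) by ring]; exact hwval0 (k+1) hk
        rw [e0, e1, e2]
    
-- PART 8: refinement index maps, block telescoping, step function evaluation
lemma refine_index {a b : ℝ} (P Q : TaggedPartition a b)
    (hsub : ∀ k ≤ P.n, ∃ j ≤ Q.n, Q.pts j = P.pts k) :
    ∃ ι : ℕ → ℕ, ι 0 = 0 ∧ ι P.n = Q.n ∧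
      (∀ k ≤ P.n, ι k ≤ Q.n ∧ Q.pts (ι k) = P.pts k) ∧
      (∀ k k', k < k' → k' ≤ P.n → ι k < ι k') := by
  classical
  have hsub' : ∀ k : ℕ, ∃ j : ℕ, k ≤ P.n → (j ≤ Q.n ∧ Q.pts j = P.pts k) := by
    intro k
    by_cases hk : k ≤ P.n
    · obtain ⟨j, hj1, hj2⟩ := hsub k hk
      exact ⟨j, fun _ => ⟨hj1, hj2⟩⟩
    · exact ⟨0, fun h => absurd h hk⟩
  choose ι hι using hsub'
  have hprop : ∀ k ≤ P.n, ι k ≤ Q.n ∧ Q.pts (ι k) = P.pts k := fun k hk => hι k hk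
  have hmono : ∀ k k', k < k' → k' ≤ P.n → ι k < ι k' := by
    intro k k' hkk' hk'
    have h1 := hprop k (by omega)
    have h2 := hprop k' hk'
    by_contra hcon
    push_neg at hcon
    have : Q.pts (ι k') ≤ Q.pts (ι k) := Q.pts_le hcon h1.1
    rw [h1.2, h2.2] at this
    exact absurd (P.pts_lt hkk' hk') (not_lt.mpr this)
  refine ⟨ι, ?_, ?_, hprop, hmono⟩
  · have h1 := hprop 0 (Nat.zero_le _)
    by_contra hne
    have hpos : 0 < ι 0 := Nat.pos_of_ne_zero hne
    have : Q.pts 0 < Q.pts (ι 0) := Q.pts_lt hpos h1.1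
    rw [h1.2, P.pts_zero, Q.pts_zero] at this
    exact lt_irrefl a this
  · have h1 := hprop P.n le_rfl
    rcases eq_or_lt_of_le h1.1 with h | h
    · exact h
    · exfalso
      have : Q.pts (ι P.n) < Q.pts Q.n := Q.pts_lt h le_rfl
      rw [h1.2, P.pts_last, Q.pts_last] at this
      exact lt_irrefl b this

lemma sum_blocks (F : ℕ → ℝ) (ι : ℕ → ℕ) (n : ℕ) (h0 : ι 0 = 0)
    (hmono : ∀ k < n, ι k ≤ ι (k+1)) :
    ∑ j ∈ Finset.range (ι n), F j = ∑ k ∈ Finset.range n, ∑ j ∈ Finset.Ico (ι k) (ι (k+1)), F j := by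
  induction n with
  | zero => rw [h0]; simp
  | succ p ih =>
    rw [Finset.sum_range_succ, ← ih (fun k hk => hmono k (by omega)),
      Finset.sum_Ico_eq_sub _ (hmono p (by omega))]
    ring

lemma block_telescope (s g : ℝ → ℝ) {a b : ℝ} (Q : TaggedPartition a b) {p q : ℕ}
    (hpq : p < q) (hq : q ≤ Q.n) (c : ℝ)
    (hconst : ∀ j, p < j → j < q → s (Q.pts j) = c) :
    ∑ j ∈ Finset.Ico p q, (s (Q.pts j) * (g (Q.tag j) - g (Q.pts j))
        + s (Q.pts (j+1)) * (g (Q.pts (j+1)) - g (Q.tag j)))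
    = s (Q.pts p) * (g (Q.tag p) - g (Q.pts p))
      + s (Q.pts q) * (g (Q.pts q) - g (Q.tag (q-1)))
      + c * (g (Q.tag (q-1)) - g (Q.tag p)) := by
  induction q with
  | zero => omega
  | succ r ih =>
    rcases Nat.lt_or_ge p r with hpr | hpr
    · -- r > p : use ih
      have hr : r ≤ Q.n := by omega
      have ihr := ih hpr hr (fun j h1 h2 => hconst j h1 (by omega))
      rw [Finset.sum_Ico_succ_top (by omega : p ≤ r), ihr]
      have e1 : s (Q.pts r) = c := hconst r hpr (by omega)
      have e2 : r + 1 - 1 = r := by omega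
      have e3 : r - 1 + 1 = r := by omega
      rw [e2, e1]
      ring
    · -- q = p+1
      have hrp : p = r := by omega
      subst hrp
      rw [Finset.sum_Ico_succ_top (le_refl p), Finset.Ico_self, Finset.sum_empty]
      have e2 : p + 1 - 1 = p := by omega
      rw [e2]
      ring

lemma stepOf_eval_Ioo {f : ℝ → ℝ} {m : ℕ} {σ : ℕ → ℝ} (hmono : ∀ k < m, σ k < σ (k+1))
    {k : ℕ} (hk : k < m) {x : ℝ} (hx : x ∈ Ioo (σ k) (σ (k+1))) :
    stepOf f m σ x = f ((σ k + σ (k+1))/2) := by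
  classical
  have hxσ : ∀ i ≤ m, x ≠ σ i := by
    intro i hi hxi
    rcases Nat.lt_or_ge i (k+1) with h | h
    · have : σ i ≤ σ k := div_le hmono (by omega) (le_of_lt hk)
      rw [hxi] at hx
      exact absurd hx.1 (not_lt.mpr this)
    · have : σ (k+1) ≤ σ i := div_le hmono h hi
      rw [hxi] at hx
      exact absurd hx.2 (not_lt.mpr this)
  rw [stepOf]
  have hz2 : ∑ i ∈ Finset.range (m+1), f (σ i) * (if x = σ i then (1:ℝ) else 0) = 0 := by
    apply Finset.sum_eq_zero
    intro i hi
    simp only [Finset.mem_range] at hi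
    rw [if_neg (hxσ i (by omega)), mul_zero]
  have hz1 : ∑ i ∈ Finset.range m, f ((σ i + σ (i+1))/2) *
      (if x ∈ Ioo (σ i) (σ (i+1)) then (1:ℝ) else 0) = f ((σ k + σ (k+1))/2) := by
    rw [Finset.sum_eq_single_of_mem k (Finset.mem_range.mpr hk)]
    · rw [if_pos hx, mul_one]
    · intro i hi hik
      simp only [Finset.mem_range] at hi
      rw [if_neg, mul_zero]
      intro hmem
      rcases Nat.lt_or_ge i k with h | h
      · have : σ (i+1) ≤ σ k := div_le hmono h (le_of_lt hk)
        exact absurd (lt_of_lt_of_le hmem.2 this) (not_lt.mpr (le_of_lt hx.1))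
      · have hik' : k < i := by omega
        have : σ (k+1) ≤ σ i := div_le hmono hik' (le_of_lt hi)
        exact absurd (lt_of_lt_of_le hx.2 this) (not_lt.mpr (le_of_lt hmem.1))
  rw [hz1, hz2, add_zero]

lemma stepOf_eval_pt {f : ℝ → ℝ} {m : ℕ} {σ : ℕ → ℝ} (hmono : ∀ k < m, σ k < σ (k+1))
    {k : ℕ} (hk : k ≤ m) : stepOf f m σ (σ k) = f (σ k) := by
  classical
  rw [stepOf]
  have hz1 : ∑ i ∈ Finset.range m, f ((σ i + σ (i+1))/2) *
      (if σ k ∈ Ioo (σ i) (σ (i+1)) then (1:ℝ) else 0) = 0 := by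
    apply Finset.sum_eq_zero
    intro i hi
    simp only [Finset.mem_range] at hi
    rw [if_neg, mul_zero]
    intro hmem
    rcases Nat.lt_or_ge k (i+1) with h | h
    · have : σ k ≤ σ i := div_le hmono (by omega) (le_of_lt hi)
      exact absurd hmem.1 (not_lt.mpr this)
    · have : σ (i+1) ≤ σ k := div_le hmono h hk
      exact absurd hmem.2 (not_lt.mpr this)
  have hz2 : ∑ i ∈ Finset.range (m+1), f (σ i) * (if σ k = σ i then (1:ℝ) else 0)
      = f (σ k) := by
    rw [Finset.sum_eq_single_of_mem k (Finset.mem_range.mpr (by omega))]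
    · rw [if_pos rfl, mul_one]
    · intro i hi hik
      simp only [Finset.mem_range] at hi
      rw [if_neg, mul_zero]
      intro hxi
      rcases Nat.lt_or_ge k i with h | h
      · have h1 := lt_of_lt_of_le (hmono k (by omega)) (div_le hmono h (by omega))
        rw [hxi] at h1; exact lt_irrefl _ h1
      · have hik' : i < k := by omega
        have h1 := lt_of_lt_of_le (hmono i (by omega)) (div_le hmono hik' hk)
        rw [← hxi] at h1; exact lt_irrefl _ h1
  rw [hz1, hz2, zero_add]

lemma stepOf_bound {f : ℝ → ℝ} {a b M : ℝ}
    {m : ℕ} {σ : ℕ → ℝ} (hm : 0 < m) (h0 : σ 0 = a) (hl : σ m = b)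
    (hmono : ∀ k < m, σ k < σ (k+1)) (hM : ∀ x ∈ Icc a b, |f x| ≤ M) :
    ∀ x ∈ Icc a b, |stepOf f m σ x| ≤ M := by
  intro x hx
  classical
  have hσmem : ∀ k ≤ m, σ k ∈ Icc a b := by
    intro k hk
    exact ⟨h0 ▸ div_le hmono (Nat.zero_le k) hk, hl ▸ div_le hmono hk le_rfl⟩
  by_cases hxσ : ∃ k ≤ m, x = σ k
  · obtain ⟨k, hk, hkx⟩ := hxσ
    rw [hkx, stepOf_eval_pt hmono hk]
    exact hM _ (hσmem k hk)
  · push_neg at hxσ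
    obtain ⟨k, hk, hk1, hk2⟩ := exists_div_interval hm hmono (h0 ▸ hx.1) (hl ▸ hx.2)
    have hx1 : σ k < x := lt_of_le_of_ne hk1 (fun h => hxσ k (le_of_lt hk) h.symm)
    have hx2 : x < σ (k+1) := lt_of_le_of_ne hk2 (hxσ (k+1) hk)
    rw [stepOf_eval_Ioo hmono hk ⟨hx1, hx2⟩]
    apply hM
    have h1 := (hσmem k (le_of_lt hk)).1
    have h2 := (hσmem (k+1) hk).2
    have h3 := hmono k hk
    exact ⟨by linarith, by linarith⟩
-- PART 9: the refinement estimate for U-sums of a step function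
lemma sum_ite_card {n : ℕ} (pred : ℕ → Prop) [DecidablePred pred] (c : ℝ) (hc : 0 ≤ c)
    (t : ℕ) (hcard : ((Finset.range n).filter pred).card ≤ t) :
    ∑ k ∈ Finset.range n, (if pred k then c else 0) ≤ (t : ℝ) * c := by
  rw [← Finset.sum_filter, Finset.sum_const, nsmul_eq_mul]
  exact mul_le_mul_of_nonneg_right (by exact_mod_cast hcard) hc

lemma Usum_refine_est {s g : ℝ → ℝ} {a b : ℝ} (P Q : TaggedPartition a b)
    (hPint : InteriorTags P) (hQint : InteriorTags Q)
    (hsub : ∀ k ≤ P.n, ∃ j ≤ Q.n, Q.pts j = P.pts k)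
    {m : ℕ} {σ : ℕ → ℝ} (hm : 0 < m)
    (hmono : ∀ k < m, σ k < σ (k+1))
    (h0 : σ 0 = a) (hl : σ m = b)
    (hPσ : ∀ i ≤ m, ∃ k ≤ P.n, P.pts k = σ i)
    (hconst : ∀ i < m, ∀ x ∈ Ioo (σ i) (σ (i+1)), ∀ y ∈ Ioo (σ i) (σ (i+1)), s x = s y)
    {M : ℝ} (hM : ∀ x ∈ Icc a b, |s x| ≤ M)
    {ε₁ : ℝ} (hε₁ : 0 ≤ ε₁)
    (Hosc : ∀ k < P.n, ((∃ i ≤ m, P.pts k = σ i) ∨ (∃ i ≤ m, P.pts (k+1) = σ i)) →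
      ∀ u v, P.pts k < u → u < P.pts (k+1) → P.pts k < v → v < P.pts (k+1) → |g u - g v| ≤ ε₁) :
    |Usum s g P - Usum s g Q| ≤ ((m:ℝ)+1) * (2*M*ε₁) + ((m:ℝ)+1) * (2*M*ε₁) := by
  classical
  have hM0 : 0 ≤ M := le_trans (abs_nonneg _) (hM a ⟨le_rfl, le_of_lt P.a_lt_b⟩)
  obtain ⟨ι, hι0, hιn, hιp, hιmono⟩ := refine_index P Q hsub
  have hQblocks : Usum s g Q = ∑ k ∈ Finset.range P.n, ∑ j ∈ Finset.Ico (ι k) (ι (k+1)),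
      (s (Q.pts j) * (g (Q.tag j) - g (Q.pts j))
        + s (Q.pts (j+1)) * (g (Q.pts (j+1)) - g (Q.tag j))) := by
    rw [Usum, ← hιn]
    exact sum_blocks _ ι P.n hι0 (fun k hk => le_of_lt (hιmono k (k+1) (by omega) (by omega)))
  have hIntvl : ∀ k < P.n, ∃ i < m, σ i ≤ P.pts k ∧ P.pts (k+1) ≤ σ (i+1) := by
    intro k hk
    have hτ := hPint k hk
    obtain ⟨i, hi, hi1, hi2⟩ := exists_div_interval hm hmono
      (show σ 0 ≤ P.tag k by rw [h0]; exact (P.tag_mem_Icc hk).1)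
      (show P.tag k ≤ σ m by rw [hl]; exact (P.tag_mem_Icc hk).2)
    refine ⟨i, hi, ?_, ?_⟩
    · by_contra hcon
      push_neg at hcon
      obtain ⟨k', hk', hk'e⟩ := hPσ i (le_of_lt hi)
      have h1 : P.pts k < P.pts k' := by rw [hk'e]; exact hcon
      have h2 : P.pts k' < P.pts (k+1) := by rw [hk'e]; exact lt_of_le_of_lt hi1 hτ.2
      have hkk' : k < k' := by
        by_contra hcc
        push_neg at hcc
        exact absurd (P.pts_le hcc (le_of_lt hk)) (not_le.mpr h1)
      have hk'k1 : k' < k+1 := by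
        by_contra hcc
        push_neg at hcc
        exact absurd (P.pts_le hcc hk') (not_le.mpr h2)
      omega
    · by_contra hcon
      push_neg at hcon
      obtain ⟨k', hk', hk'e⟩ := hPσ (i+1) hi
      have h1 : P.pts k < P.pts k' := by rw [hk'e]; exact lt_of_lt_of_le hτ.1 hi2
      have h2 : P.pts k' < P.pts (k+1) := by rw [hk'e]; exact hcon
      have hkk' : k < k' := by
        by_contra hcc
        push_neg at hcc
        exact absurd (P.pts_le hcc (le_of_lt hk)) (not_le.mpr h1)
      have hk'k1 : k' < k+1 := by
        by_contra hcc
        push_neg at hcc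
        exact absurd (P.pts_le hcc hk') (not_le.mpr h2)
      omega
  have hblock : ∀ k < P.n, ∑ j ∈ Finset.Ico (ι k) (ι (k+1)),
      (s (Q.pts j) * (g (Q.tag j) - g (Q.pts j))
        + s (Q.pts (j+1)) * (g (Q.pts (j+1)) - g (Q.tag j)))
      = s (P.pts k) * (g (Q.tag (ι k)) - g (P.pts k))
        + s (P.pts (k+1)) * (g (P.pts (k+1)) - g (Q.tag (ι (k+1) - 1)))
        + s (P.tag k) * (g (Q.tag (ι (k+1) - 1)) - g (Q.tag (ι k))) := by
    intro k hk
    have hpq : ι k < ι (k+1) := hιmono k (k+1) (by omega) (by omega)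
    have hq : ι (k+1) ≤ Q.n := (hιp (k+1) (by omega)).1
    obtain ⟨i, hi, hle1, hle2⟩ := hIntvl k hk
    have hτ := hPint k hk
    have hconst' : ∀ j, ι k < j → j < ι (k+1) → s (Q.pts j) = s (P.tag k) := by
      intro j h1 h2
      have hjn : j ≤ Q.n := by omega
      have e1 : P.pts k < Q.pts j := by
        have := Q.pts_lt h1 hjn
        rwa [(hιp k (by omega)).2] at this
      have e2 : Q.pts j < P.pts (k+1) := by
        have := Q.pts_lt h2 hq
        rwa [(hιp (k+1) (by omega)).2] at this
      exact hconst i hi (Q.pts j) ⟨lt_of_le_of_lt hle1 e1, lt_of_lt_of_le e2 hle2⟩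
        (P.tag k) ⟨lt_of_le_of_lt hle1 hτ.1, lt_of_lt_of_le hτ.2 hle2⟩
    have hb := block_telescope s g Q hpq hq (s (P.tag k)) hconst'
    rw [hb, (hιp k (by omega)).2, (hιp (k+1) (by omega)).2]
  have hdiff : Usum s g P - Usum s g Q = ∑ k ∈ Finset.range P.n,
      ((s (P.pts k) - s (P.tag k)) * (g (P.tag k) - g (Q.tag (ι k)))
        + (s (P.pts (k+1)) - s (P.tag k)) * (g (Q.tag (ι (k+1) - 1)) - g (P.tag k))) := by
    rw [Usum, hQblocks, ← Finset.sum_sub_distrib]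
    apply Finset.sum_congr rfl
    intro k hk
    rw [hblock k (Finset.mem_range.mp hk)]
    ring
  -- facts about the interior Q tags
  have hQt1 : ∀ k < P.n, P.pts k < Q.tag (ι k) ∧ Q.tag (ι k) < P.pts (k+1) := by
    intro k hk
    have hpq : ι k < ι (k+1) := hιmono k (k+1) (by omega) (by omega)
    have hq : ι (k+1) ≤ Q.n := (hιp (k+1) (by omega)).1
    have hιk_lt : ι k < Q.n := by omega
    constructor
    · have := (hQint (ι k) hιk_lt).1
      rwa [(hιp k (by omega)).2] at this
    · have h1 : Q.tag (ι k) < Q.pts (ι k + 1) := (hQint (ι k) hιk_lt).2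
      have h2 : Q.pts (ι k + 1) ≤ Q.pts (ι (k+1)) := Q.pts_le (by omega) hq
      rw [(hιp (k+1) (by omega)).2] at h2
      linarith
  have hQt2 : ∀ k < P.n, P.pts k < Q.tag (ι (k+1) - 1) ∧ Q.tag (ι (k+1) - 1) < P.pts (k+1) := by
    intro k hk
    have hpq : ι k < ι (k+1) := hιmono k (k+1) (by omega) (by omega)
    have hq : ι (k+1) ≤ Q.n := (hιp (k+1) (by omega)).1
    have hlast : ι (k+1) - 1 < Q.n := by omega
    have hsucc : ι (k+1) - 1 + 1 = ι (k+1) := by omega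
    constructor
    · have h1 : Q.pts (ι k) ≤ Q.pts (ι (k+1) - 1) := Q.pts_le (by omega) (by omega)
      have h2 : Q.pts (ι (k+1) - 1) < Q.tag (ι (k+1) - 1) := (hQint _ hlast).1
      rw [(hιp k (by omega)).2] at h1
      linarith
    · have h1 : Q.tag (ι (k+1) - 1) < Q.pts (ι (k+1) - 1 + 1) := (hQint _ hlast).2
      rw [hsucc, (hιp (k+1) (by omega)).2] at h1
      exact h1
  have hterm : ∀ k < P.n,
      |(s (P.pts k) - s (P.tag k)) * (g (P.tag k) - g (Q.tag (ι k)))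
        + (s (P.pts (k+1)) - s (P.tag k)) * (g (Q.tag (ι (k+1) - 1)) - g (P.tag k))|
      ≤ (if (∃ i ≤ m, P.pts k = σ i) then 2*M*ε₁ else 0)
        + (if (∃ i ≤ m, P.pts (k+1) = σ i) then 2*M*ε₁ else 0) := by
    intro k hk
    have hτ := hPint k hk
    refine le_trans (abs_add_le _ _) (add_le_add ?_ ?_)
    · by_cases hcase : ∃ i ≤ m, P.pts k = σ i
      · rw [if_pos hcase]
        have ht' := hQt1 k hk
        have hosc := Hosc k hk (Or.inl hcase) (P.tag k) (Q.tag (ι k)) hτ.1 hτ.2 ht'.1 ht'.2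
        rw [abs_mul]
        have h2M : |s (P.pts k) - s (P.tag k)| ≤ 2*M := by
          have b1 := hM _ (P.pts_mem (le_of_lt hk))
          have b2 := hM _ (P.tag_mem_Icc hk)
          calc |s (P.pts k) - s (P.tag k)| ≤ |s (P.pts k)| + |s (P.tag k)| := abs_sub _ _
            _ ≤ 2*M := by linarith
        exact mul_le_mul h2M hosc (abs_nonneg _) (by linarith)
      · rw [if_neg hcase]
        obtain ⟨i, hi, hle1, hle2⟩ := hIntvl k hk
        have hz : P.pts k ∈ Ioo (σ i) (σ (i+1)) :=
          ⟨lt_of_le_of_ne hle1 (fun h => hcase ⟨i, le_of_lt hi, h.symm⟩),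
            lt_of_lt_of_le (lt_trans hτ.1 hτ.2) hle2⟩
        have hτmem : P.tag k ∈ Ioo (σ i) (σ (i+1)) :=
          ⟨lt_of_le_of_lt hle1 hτ.1, lt_of_lt_of_le hτ.2 hle2⟩
        rw [hconst i hi _ hz _ hτmem]
        simp
    · by_cases hcase : ∃ i ≤ m, P.pts (k+1) = σ i
      · rw [if_pos hcase]
        have ht' := hQt2 k hk
        have hosc := Hosc k hk (Or.inr hcase) (Q.tag (ι (k+1) - 1)) (P.tag k)
          ht'.1 ht'.2 hτ.1 hτ.2
        rw [abs_mul]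
        have h2M : |s (P.pts (k+1)) - s (P.tag k)| ≤ 2*M := by
          have b1 := hM _ (P.pts_mem hk)
          have b2 := hM _ (P.tag_mem_Icc hk)
          calc |s (P.pts (k+1)) - s (P.tag k)| ≤ |s (P.pts (k+1))| + |s (P.tag k)| := abs_sub _ _
            _ ≤ 2*M := by linarith
        exact mul_le_mul h2M hosc (abs_nonneg _) (by linarith)
      · rw [if_neg hcase]
        obtain ⟨i, hi, hle1, hle2⟩ := hIntvl k hk
        have hz : P.pts (k+1) ∈ Ioo (σ i) (σ (i+1)) :=
          ⟨lt_of_le_of_lt hle1 (lt_trans hτ.1 hτ.2),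
            lt_of_le_of_ne hle2 (fun h => hcase ⟨i+1, hi, h⟩)⟩
        have hτmem : P.tag k ∈ Ioo (σ i) (σ (i+1)) :=
          ⟨lt_of_le_of_lt hle1 hτ.1, lt_of_lt_of_le hτ.2 hle2⟩
        rw [hconst i hi _ hz _ hτmem]
        simp
  -- counting
  have hMε : 0 ≤ 2*M*ε₁ := by positivity
  have hinj : ∀ k k', k ≤ P.n → k' ≤ P.n → P.pts k = P.pts k' → k = k' := by
    intro k k' hk hk' he
    by_contra hne
    rcases Nat.lt_or_ge k k' with h | h
    · exact absurd (P.pts_lt h hk') (by rw [he]; exact lt_irrefl _)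
    · have : k' < k := by omega
      exact absurd (P.pts_lt this hk) (by rw [he]; exact lt_irrefl _)
  have hcard1 : ((Finset.range P.n).filter (fun k => ∃ i ≤ m, P.pts k = σ i)).card ≤ m+1 := by
    have := Finset.card_le_card_of_injOn
      (f := fun k => if h : ∃ i ≤ m, P.pts k = σ i then h.choose else 0)
      (s := (Finset.range P.n).filter (fun k => ∃ i ≤ m, P.pts k = σ i))
      (t := Finset.range (m+1)) ?_ ?_
    · simpa using this
    · intro k hk
      simp only [Finset.coe_filter, mem_setOf_eq, Finset.mem_range] at hk
      simp only [dif_pos hk.2]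
      exact Finset.mem_range.mpr (by have := hk.2.choose_spec.1; omega)
    · intro k hk k' hk' he
      simp only [Finset.coe_filter, mem_setOf_eq, Finset.mem_range] at hk hk'
      simp only [dif_pos hk.2, dif_pos hk'.2] at he
      have e1 := hk.2.choose_spec.2
      have e2 := hk'.2.choose_spec.2
      rw [he] at e1
      exact hinj k k' (by omega) (by omega) (e1.trans e2.symm)
  have hcard2 : ((Finset.range P.n).filter (fun k => ∃ i ≤ m, P.pts (k+1) = σ i)).card ≤ m+1 := by
    have := Finset.card_le_card_of_injOn
      (f := fun k => if h : ∃ i ≤ m, P.pts (k+1) = σ i then h.choose else 0)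
      (s := (Finset.range P.n).filter (fun k => ∃ i ≤ m, P.pts (k+1) = σ i))
      (t := Finset.range (m+1)) ?_ ?_
    · simpa using this
    · intro k hk
      simp only [Finset.coe_filter, mem_setOf_eq, Finset.mem_range] at hk
      simp only [dif_pos hk.2]
      exact Finset.mem_range.mpr (by have := hk.2.choose_spec.1; omega)
    · intro k hk k' hk' he
      simp only [Finset.coe_filter, mem_setOf_eq, Finset.mem_range] at hk hk'
      simp only [dif_pos hk.2, dif_pos hk'.2] at he
      have e1 := hk.2.choose_spec.2
      have e2 := hk'.2.choose_spec.2
      rw [he] at e1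
      have := hinj (k+1) (k'+1) (by omega) (by omega) (e1.trans e2.symm)
      omega
  rw [hdiff]
  refine le_trans (Finset.abs_sum_le_sum_abs _ _) ?_
  refine le_trans (Finset.sum_le_sum (fun k hk => hterm k (Finset.mem_range.mp hk))) ?_
  rw [Finset.sum_add_distrib]
  have b1 := sum_ite_card (n := P.n) (fun k => ∃ i ≤ m, P.pts k = σ i) (2*M*ε₁) hMε (m+1) hcard1
  have b2 := sum_ite_card (n := P.n) (fun k => ∃ i ≤ m, P.pts (k+1) = σ i) (2*M*ε₁) hMε (m+1) hcard2
  push_cast at b1 b2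
  linarith
-- PART 10: constructing partitions from finite sets; Dushnik net convergence
lemma exists_partition {a b : ℝ} (hab : a < b) (F : Finset ℝ) (ha : a ∈ F) (hb : b ∈ F)
    (hF : ∀ x ∈ F, x ∈ Icc a b) (T : ℝ → ℝ → ℝ)
    (hT : ∀ u v, u < v → T u v ∈ Ioo u v) :
    ∃ P : TaggedPartition a b,
      (∀ j ≤ P.n, P.pts j ∈ F) ∧ (∀ x ∈ F, ∃ j ≤ P.n, P.pts j = x) ∧
      (∀ j < P.n, P.tag j = T (P.pts j) (P.pts (j+1))) ∧ InteriorTags P ∧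
      (∀ j < P.n, ∀ x ∈ F, ¬(P.pts j < x ∧ x < P.pts (j+1))) := by
  classical
  set N := F.card with hN
  have hN2 : 2 ≤ N := by
    rw [hN]
    exact Finset.one_lt_card.mpr ⟨a, ha, b, hb, ne_of_lt hab⟩
  set e := F.orderIsoOfFin rfl with he
  set pts : ℕ → ℝ := fun j => if h : j < N then (e ⟨j, h⟩ : ℝ) else b with hpts
  have hptsF : ∀ j, j < N → pts j ∈ F := by
    intro j hj
    simp only [hpts, dif_pos hj]
    exact (e ⟨j, hj⟩).2
  have hmono : ∀ j k (hj : j < N) (hk : k < N), j < k → pts j < pts k := by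
    intro j k hj hk hjk
    simp only [hpts, dif_pos hj, dif_pos hk]
    exact_mod_cast e.strictMono (show (⟨j, hj⟩ : Fin N) < ⟨k, hk⟩ from hjk)
  have hsurj : ∀ x ∈ F, ∃ j : ℕ, ∃ h : j < N, pts j = x := by
    intro x hx
    refine ⟨(e.symm ⟨x, hx⟩ : Fin N).val, (e.symm ⟨x, hx⟩).isLt, ?_⟩
    simp only [hpts, dif_pos (e.symm ⟨x, hx⟩).isLt]
    have : e (e.symm ⟨x, hx⟩) = ⟨x, hx⟩ := e.apply_symm_apply _
    rw [dif_pos (show ((e.symm ⟨x, hx⟩ : Fin N) : ℕ) < N from (e.symm ⟨x, hx⟩).isLt)]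
    rw [show (⟨(e.symm ⟨x, hx⟩ : Fin N).val, (e.symm ⟨x, hx⟩).isLt⟩ : Fin N)
      = e.symm ⟨x, hx⟩ from Fin.ext rfl, this]
  have hpts0 : pts 0 = a := by
    obtain ⟨j, hj, hje⟩ := hsurj a ha
    have h1 : pts 0 ≤ pts j := by
      rcases Nat.eq_zero_or_pos j with h | h
      · rw [h]
      · exact le_of_lt (hmono 0 j (by omega) hj h)
    rw [hje] at h1
    have h2 : a ≤ pts 0 := (hF _ (hptsF 0 (by omega))).1
    linarith
  have hptslast : pts (N-1) = b := by
    obtain ⟨j, hj, hje⟩ := hsurj b hb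
    have h1 : pts j ≤ pts (N-1) := by
      rcases Nat.lt_or_ge j (N-1) with h | h
      · exact le_of_lt (hmono j (N-1) hj (by omega) h)
      · have : j = N - 1 := by omega
        rw [this]
    rw [hje] at h1
    have h2 : pts (N-1) ≤ b := (hF _ (hptsF (N-1) (by omega))).2
    linarith
  have hptsmono : ∀ j < N-1, pts j < pts (j+1) := fun j hj =>
    hmono j (j+1) (by omega) (by omega) (by omega)
  refine ⟨⟨N-1, pts, fun j => T (pts j) (pts (j+1)), by omega, hpts0, hptslast,
    hptsmono, ?_⟩, ?_, ?_, ?_, ?_, ?_⟩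
  · intro j hj
    have := hT (pts j) (pts (j+1)) (hptsmono j hj)
    exact ⟨le_of_lt this.1, le_of_lt this.2⟩
  · intro j hj
    simp only at hj ⊢
    exact hptsF j (by omega)
  · intro x hx
    obtain ⟨j, hj, hje⟩ := hsurj x hx
    exact ⟨j, by simp; omega, hje⟩
  · intro j _
    rfl
  · intro j hj
    simp only at hj
    exact hT (pts j) (pts (j+1)) (hptsmono j hj)
  · intro j hj x hx ⟨h1, h2⟩
    simp only at hj
    obtain ⟨i, hi, hie⟩ := hsurj x hx
    rw [← hie] at h1 h2
    have hji : j < i := by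
      by_contra h
      push_neg at h
      rcases eq_or_lt_of_le h with h' | h'
      · rw [h'] at h1; exact lt_irrefl _ h1
      · exact absurd (hmono i j hi (by omega) h') (not_lt.mpr (le_of_lt h1))
    have hij : i < j+1 := by
      by_contra h
      push_neg at h
      rcases eq_or_lt_of_le h with h' | h'
      · rw [← h'] at h2; exact lt_irrefl _ h2
      · exact absurd (hmono (j+1) i (by omega) hi h') (not_lt.mpr (le_of_lt h2))
    omega

/-- Points of a refining partition adjacent to a division point are near it. -/
lemma refines_next_le {a b : ℝ} (P : TaggedPartition a b) {D : Finset ℝ} (href : Refines P D)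
    {x : ℝ} (hx : x ∈ D) {k : ℕ} (hk : k < P.n) (h1 : P.pts k < x) : P.pts (k+1) ≤ x := by
  obtain ⟨j, hj, hje⟩ := href x hx
  rcases Nat.lt_or_ge k j with h | h
  · rw [← hje]
    exact P.pts_le (by omega) hj
  · exfalso
    have : P.pts j ≤ P.pts k := P.pts_le h (le_of_lt hk)
    rw [hje] at this
    linarith

lemma refines_prev_le {a b : ℝ} (P : TaggedPartition a b) {D : Finset ℝ} (href : Refines P D)
    {x : ℝ} (hx : x ∈ D) {k : ℕ} (hk : k < P.n) (h1 : x < P.pts (k+1)) : x ≤ P.pts k := by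
  obtain ⟨j, hj, hje⟩ := href x hx
  rcases Nat.lt_or_ge j (k+1) with h | h
  · rw [← hje]
    exact P.pts_le (by omega) (le_of_lt hk)
  · exfalso
    have : P.pts (k+1) ≤ P.pts j := P.pts_le h hj
    rw [hje] at this
    linarith

lemma Usum_cauchy_data {f g : ℝ → ℝ} {a b : ℝ} (hab : a < b) (hf : Regulated f a b)
    (hg : Regulated g a b) {ε : ℝ} (hε : 0 < ε)
    (hgbv : BoundedVariationOn g (Set.Icc a b)) :
    ∃ Dset : Finset ℝ, ↑Dset ⊆ Icc a b ∧
      ∀ P P' : TaggedPartition a b, Refines P Dset → InteriorTags P →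
        Refines P' Dset → InteriorTags P' → |Usum f g P - Usum f g P'| ≤ ε := by
  classical
  obtain ⟨M, hM0, hMf⟩ := regulated_bounded hf hab
  set V := var g a b with hV
  have hV0 : 0 ≤ V := var_nonneg g a b
  set ε₀ := ε/(4*(V+1)) with hε₀def
  have hε₀ : 0 < ε₀ := by rw [hε₀def]; positivity
  obtain ⟨m, σ, hm, h0, hl, hmono, hosc⟩ := regulated_division hf hab hε₀
  set s := stepOf f m σ with hs
  have happrox : ∀ x ∈ Icc a b, |f x - s x| ≤ ε₀ :=
    stepOf_approx hab (le_of_lt hε₀) hm h0 hl hmono hosc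
  have hconst : ∀ i < m, ∀ x ∈ Ioo (σ i) (σ (i+1)), ∀ y ∈ Ioo (σ i) (σ (i+1)), s x = s y := by
    intro i hi x hx y hy
    rw [hs, stepOf_eval_Ioo hmono hi hx, stepOf_eval_Ioo hmono hi hy]
  have hMs : ∀ x ∈ Icc a b, |s x| ≤ M := stepOf_bound hm h0 hl hmono hMf
  set ε₁ := ε/(16*((m:ℝ)+1)*(M+1)) with hε₁def
  have hε₁ : 0 < ε₁ := by rw [hε₁def]; positivity
  have hσmem : ∀ k ≤ m, σ k ∈ Icc a b := by
    intro k hk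
    constructor
    · rw [← h0]; exact div_le hmono (Nat.zero_le k) hk
    · rw [← hl]; exact div_le hmono hk le_rfl
  have Hr : ∀ i : ℕ, ∃ d : ℝ, 0 < d ∧ (i < m → (σ i + d < σ (i+1) ∧
      ∀ u v, σ i < u → u ≤ σ i + d → σ i < v → v ≤ σ i + d → |g u - g v| ≤ ε₁)) := by
    intro i
    by_cases hi : i < m
    · have hiIco : σ i ∈ Ico a b := ⟨(hσmem i (le_of_lt hi)).1,
        lt_of_lt_of_le (hmono i hi) (hσmem (i+1) hi).2⟩
      obtain ⟨η, hη, happ⟩ := right_approx hg hiIco (half_pos hε₁)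
      refine ⟨min η ((σ (i+1) - σ i)/2), lt_min hη (by linarith [hmono i hi]), fun _ => ⟨?_, ?_⟩⟩
      · have := min_le_right η ((σ (i+1) - σ i)/2)
        linarith [hmono i hi]
      · intro u v h1 h2 h3 h4
        have hub : u ≤ b := by
          have := min_le_right η ((σ (i+1) - σ i)/2)
          have := (hσmem (i+1) hi).2
          linarith [hmono i hi]
        have hvb : v ≤ b := by
          have := min_le_right η ((σ (i+1) - σ i)/2)
          have := (hσmem (i+1) hi).2
          linarith [hmono i hi]
        have b1 := happ u h1 (le_trans h2 (by linarith [min_le_left η ((σ (i+1) - σ i)/2)])) hub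
        have b2 := happ v h3 (le_trans h4 (by linarith [min_le_left η ((σ (i+1) - σ i)/2)])) hvb
        calc |g u - g v| = |(g u - grim g b (σ i)) - (g v - grim g b (σ i))| := by ring_nf
          _ ≤ |g u - grim g b (σ i)| + |g v - grim g b (σ i)| := abs_sub _ _
          _ ≤ ε₁ := by linarith
    · exact ⟨1, one_pos, fun h => absurd h hi⟩
  choose ηr hηr0 hηr using Hr
  have Hl : ∀ i : ℕ, ∃ d : ℝ, 0 < d ∧ (i < m → (σ i < σ (i+1) - d ∧
      ∀ u v, σ (i+1) - d ≤ u → u < σ (i+1) → σ (i+1) - d ≤ v → v < σ (i+1) → |g u - g v| ≤ ε₁)) := by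
    intro i
    by_cases hi : i < m
    · have hiIoc : σ (i+1) ∈ Ioc a b := ⟨lt_of_le_of_lt (hσmem i (le_of_lt hi)).1 (hmono i hi),
        (hσmem (i+1) hi).2⟩
      obtain ⟨η, hη, happ⟩ := left_approx hg hiIoc (half_pos hε₁)
      refine ⟨min η ((σ (i+1) - σ i)/2), lt_min hη (by linarith [hmono i hi]), fun _ => ⟨?_, ?_⟩⟩
      · have := min_le_right η ((σ (i+1) - σ i)/2)
        linarith [hmono i hi]
      · intro u v h1 h2 h3 h4
        have hua : a ≤ u := by
          have h5 := min_le_right η ((σ (i+1) - σ i)/2)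
          have h6 := (hσmem i (le_of_lt hi)).1
          linarith [hmono i hi]
        have hva : a ≤ v := by
          have h5 := min_le_right η ((σ (i+1) - σ i)/2)
          have h6 := (hσmem i (le_of_lt hi)).1
          linarith [hmono i hi]
        have b1 := happ u (le_trans (by linarith [min_le_left η ((σ (i+1) - σ i)/2)]) h1) h2 hua
        have b2 := happ v (le_trans (by linarith [min_le_left η ((σ (i+1) - σ i)/2)]) h3) h4 hva
        calc |g u - g v| = |(g u - glim g a (σ (i+1))) - (g v - glim g a (σ (i+1)))| := by ring_nf
          _ ≤ |g u - glim g a (σ (i+1))| + |g v - glim g a (σ (i+1))| := abs_sub _ _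
          _ ≤ ε₁ := by linarith
    · exact ⟨1, one_pos, fun h => absurd h hi⟩
  choose ηl hηl0 hηl using Hl
  set Dset := ((Finset.range (m+1)).image σ) ∪ ((Finset.range m).image (fun i => σ i + ηr i))
      ∪ ((Finset.range m).image (fun i => σ (i+1) - ηl i)) with hDset
  have hDsub : ↑Dset ⊆ Icc a b := by
    intro x hx
    simp only [hDset, Finset.coe_union, Finset.coe_image, Finset.coe_range, mem_union,
      mem_image, mem_Iio] at hx
    rcases hx with (⟨i, hi, rfl⟩ | ⟨i, hi, rfl⟩) | ⟨i, hi, rfl⟩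
    · exact hσmem i (by omega)
    · have h1 := (hηr i hi).1
      have h2 := hηr0 i
      have h3 := (hσmem i (le_of_lt hi)).1
      have h4 := (hσmem (i+1) hi).2
      exact ⟨by linarith, by linarith⟩
    · have h1 := (hηl i hi).1
      have h2 := hηl0 i
      have h3 := (hσmem i (le_of_lt hi)).1
      have h4 := (hσmem (i+1) hi).2
      exact ⟨by linarith, by linarith⟩
  have hσD : ∀ i ≤ m, σ i ∈ Dset := by
    intro i hi
    simp only [hDset, Finset.mem_union, Finset.mem_image, Finset.mem_range]
    exact Or.inl (Or.inl ⟨i, by omega, rfl⟩)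
  have hrD : ∀ i < m, σ i + ηr i ∈ Dset := by
    intro i hi
    simp only [hDset, Finset.mem_union, Finset.mem_image, Finset.mem_range]
    exact Or.inl (Or.inr ⟨i, hi, rfl⟩)
  have hlD : ∀ i < m, σ (i+1) - ηl i ∈ Dset := by
    intro i hi
    simp only [hDset, Finset.mem_union, Finset.mem_image, Finset.mem_range]
    exact Or.inr ⟨i, hi, rfl⟩
  -- the key oscillation property for any refinement of Dset
  have Hosc : ∀ P : TaggedPartition a b, Refines P Dset →
      ∀ k < P.n, ((∃ i ≤ m, P.pts k = σ i) ∨ (∃ i ≤ m, P.pts (k+1) = σ i)) →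
      ∀ u v, P.pts k < u → u < P.pts (k+1) → P.pts k < v → v < P.pts (k+1) → |g u - g v| ≤ ε₁ := by
    intro P href k hk hcase u v hu1 hu2 hv1 hv2
    rcases hcase with ⟨i, hi, hie⟩ | ⟨i, hi, hie⟩
    · -- left endpoint is σ i
      have him : i < m := by
        rcases eq_or_lt_of_le hi with h | h
        · exfalso
          have hPb : P.pts k = b := by rw [hie, h, hl]
          have h2 := (P.pts_mem hk).2
          have h3 := P.pts_mono k hk
          linarith
        · exact h
      have hnext : P.pts (k+1) ≤ σ i + ηr i := by
        apply refines_next_le P href (hrD i him) hk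
        rw [hie]
        exact lt_add_of_pos_right _ (hηr0 i)
      apply (hηr i him).2 u v (by rw [← hie]; exact hu1) (by linarith)
        (by rw [← hie]; exact hv1) (by linarith)
    · -- right endpoint is σ i
      have hipos : 0 < i := by
        rcases Nat.eq_zero_or_pos i with h | h
        · exfalso
          have hPa : P.pts (k+1) = a := by rw [hie, h, h0]
          have h2 := (P.pts_mem (le_of_lt hk)).1
          have h3 := P.pts_mono k hk
          linarith
        · exact h
      have hi'm : i - 1 < m := by omega
      have hsucc : i - 1 + 1 = i := by omega
      have hβ : σ (i-1+1) - ηl (i-1) ∈ Dset := hlD (i-1) hi'm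
      have hprev : σ (i-1+1) - ηl (i-1) ≤ P.pts k := by
        apply refines_prev_le P href hβ hk
        rw [hsucc, hie]
        linarith [hηl0 (i-1)]
      have happly := (hηl (i-1) hi'm).2 u v
      rw [hsucc] at happly hprev
      rw [← hie] at happly
      exact happly (by linarith) hu2 (by linarith) hv2
  refine ⟨Dset, hDsub, ?_⟩
  intro P P' hrefP hintP hrefP' hintP'
  have hptsIcc : ∀ (R : TaggedPartition a b) (j : ℕ), j ∈ Finset.range (R.n+1) → R.pts j ∈ Icc a b :=
    fun R j hj => R.pts_mem (by simp at hj; omega)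
  set Fq := Dset ∪ (Finset.range (P.n+1)).image P.pts ∪ (Finset.range (P'.n+1)).image P'.pts
    with hFq
  have haF : a ∈ Fq := by
    simp only [hFq, Finset.mem_union, Finset.mem_image, Finset.mem_range]
    exact Or.inl (Or.inr ⟨0, by omega, P.pts_zero⟩)
  have hbF : b ∈ Fq := by
    simp only [hFq, Finset.mem_union, Finset.mem_image, Finset.mem_range]
    exact Or.inl (Or.inr ⟨P.n, by omega, P.pts_last⟩)
  have hFsub : ∀ x ∈ Fq, x ∈ Icc a b := by
    intro x hx
    simp only [hFq, Finset.mem_union, Finset.mem_image, Finset.mem_range] at hx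
    rcases hx with (hx | ⟨j, hj, rfl⟩) | ⟨j, hj, rfl⟩
    · exact hDsub hx
    · exact P.pts_mem (by omega)
    · exact P'.pts_mem (by omega)
  obtain ⟨Q, hQF, hQenum, hQtag, hQint, hQcons⟩ := exists_partition hab Fq haF hbF hFsub
    (fun u v => (u+v)/2) (fun u v huv => ⟨by linarith, by linarith⟩)
  have hsubP : ∀ k ≤ P.n, ∃ j ≤ Q.n, Q.pts j = P.pts k := by
    intro k hk
    apply hQenum
    simp only [hFq, Finset.mem_union, Finset.mem_image, Finset.mem_range]
    exact Or.inl (Or.inr ⟨k, by omega, rfl⟩)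
  have hsubP' : ∀ k ≤ P'.n, ∃ j ≤ Q.n, Q.pts j = P'.pts k := by
    intro k hk
    apply hQenum
    simp only [hFq, Finset.mem_union, Finset.mem_image, Finset.mem_range]
    exact Or.inr ⟨k, by omega, rfl⟩
  have hPσ : ∀ i ≤ m, ∃ k ≤ P.n, P.pts k = σ i := fun i hi => hrefP _ (hσD i hi)
  have hPσ' : ∀ i ≤ m, ∃ k ≤ P'.n, P'.pts k = σ i := fun i hi => hrefP' _ (hσD i hi)
  have est1 := Usum_refine_est P Q hintP hQint hsubP hm hmono h0 hl hPσ hconst hMs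
    (le_of_lt hε₁) (Hosc P hrefP)
  have est2 := Usum_refine_est P' Q hintP' hQint hsubP' hm hmono h0 hl hPσ' hconst hMs
    (le_of_lt hε₁) (Hosc P' hrefP')
  have d1 : |Usum f g P - Usum s g P| ≤ ε₀ * V := by
    rw [Usum_sub]
    exact abs_Usum_le hgbv happrox P
  have d2 : |Usum f g P' - Usum s g P'| ≤ ε₀ * V := by
    rw [Usum_sub]
    exact abs_Usum_le hgbv happrox P'
  have hb1 : ε₀ * V ≤ ε/4 := by
    rw [hε₀def, div_mul_eq_mul_div, div_le_div_iff₀ (by positivity) (by norm_num)]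
    nlinarith
  have hb2 : ((m:ℝ)+1) * (2*M*ε₁) + ((m:ℝ)+1) * (2*M*ε₁) ≤ ε/4 := by
    have hmm : (1:ℝ) ≤ (m:ℝ)+1 := by
      have : (0:ℝ) ≤ (m:ℝ) := Nat.cast_nonneg m
      linarith
    rw [hε₁def, show ((m:ℝ)+1) * (2*M*(ε/(16*((m:ℝ)+1)*(M+1))))
        + ((m:ℝ)+1) * (2*M*(ε/(16*((m:ℝ)+1)*(M+1))))
      = (((m:ℝ)+1) * (4*M) * ε) / (16*((m:ℝ)+1)*(M+1)) by ring,
      div_le_div_iff₀ (by positivity) (by norm_num)]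
    nlinarith [mul_nonneg (mul_nonneg (show (0:ℝ) ≤ ((m:ℝ)+1) by linarith) hM0) (le_of_lt hε)]
  calc |Usum f g P - Usum f g P'|
      = |(Usum f g P - Usum s g P) + (Usum s g P - Usum s g Q)
          - (Usum s g P' - Usum s g Q) - (Usum f g P' - Usum s g P')| := by ring_nf
    _ ≤ |(Usum f g P - Usum s g P) + (Usum s g P - Usum s g Q)
          - (Usum s g P' - Usum s g Q)| + |Usum f g P' - Usum s g P'| := abs_sub _ _
    _ ≤ |(Usum f g P - Usum s g P) + (Usum s g P - Usum s g Q)|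
          + |Usum s g P' - Usum s g Q| + |Usum f g P' - Usum s g P'| := by
        linarith [abs_sub ((Usum f g P - Usum s g P) + (Usum s g P - Usum s g Q))
          (Usum s g P' - Usum s g Q)]
    _ ≤ |Usum f g P - Usum s g P| + |Usum s g P - Usum s g Q|
          + |Usum s g P' - Usum s g Q| + |Usum f g P' - Usum s g P'| := by
        linarith [abs_add_le (Usum f g P - Usum s g P) (Usum s g P - Usum s g Q)]
    _ ≤ ε := by linarith

lemma DushnikU_exists {f g : ℝ → ℝ} {a b : ℝ} (hab : a < b) (hf : Regulated f a b)
    (hg : Regulated g a b) (hgbv : BoundedVariationOn g (Set.Icc a b)) :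
    ∃ U : ℝ, ∀ ε > 0, ∃ Dset : Finset ℝ, ↑Dset ⊆ Icc a b ∧
      ∀ P : TaggedPartition a b, Refines P Dset → InteriorTags P → |Usum f g P - U| < ε := by
  have H : ∀ n : ℕ, ∃ Dset : Finset ℝ, ↑Dset ⊆ Icc a b ∧
      ∀ P P' : TaggedPartition a b, Refines P Dset → InteriorTags P →
        Refines P' Dset → InteriorTags P' → |Usum f g P - Usum f g P'| ≤ 1/((n:ℝ)+1) :=
    fun n => Usum_cauchy_data hab hf hg (by positivity) hgbv
  choose Dn hDsub hDpair using H
  set Fn : ℕ → Finset ℝ := fun n => (Finset.range (n+1)).biUnion Dn ∪ {a, b} with hFn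
  have haF : ∀ n, a ∈ Fn n := by
    intro n
    simp [hFn]
  have hbF : ∀ n, b ∈ Fn n := by
    intro n
    simp [hFn]
  have hFsub : ∀ n, ∀ x ∈ Fn n, x ∈ Icc a b := by
    intro n x hx
    simp only [hFn, Finset.mem_union, Finset.mem_biUnion, Finset.mem_range,
      Finset.mem_insert, Finset.mem_singleton] at hx
    rcases hx with ⟨i, _, hxi⟩ | (rfl | rfl)
    · exact hDsub i hxi
    · exact ⟨le_rfl, le_of_lt hab⟩
    · exact ⟨le_of_lt hab, le_rfl⟩
  have hPn : ∀ n : ℕ, ∃ P : TaggedPartition a b,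
      (∀ j ≤ P.n, P.pts j ∈ Fn n) ∧ (∀ x ∈ Fn n, ∃ j ≤ P.n, P.pts j = x) ∧
      (∀ j < P.n, P.tag j = (fun u v => (u+v)/2) (P.pts j) (P.pts (j+1))) ∧ InteriorTags P ∧
      (∀ j < P.n, ∀ x ∈ Fn n, ¬(P.pts j < x ∧ x < P.pts (j+1))) :=
    fun n => exists_partition hab (Fn n) (haF n) (hbF n) (hFsub n)
      (fun u v => (u+v)/2) (fun u v huv => ⟨by linarith, by linarith⟩)
  choose Pn hPn1 hPn2 hPn3 hPn4 hPn5 using hPn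
  have hrefines : ∀ i n : ℕ, i ≤ n → Refines (Pn n) (Dn i) := by
    intro i n hin x hx
    apply hPn2 n x
    simp only [hFn, Finset.mem_union, Finset.mem_biUnion, Finset.mem_range]
    exact Or.inl ⟨i, by omega, hx⟩
  have hcauchy : CauchySeq (fun n => Usum f g (Pn n)) := by
    apply cauchySeq_of_le_tendsto_0 (b := fun N : ℕ => 1/((N:ℝ)+1)) _
      tendsto_one_div_add_atTop_nhds_zero_nat
    intro n n' N hn hn'
    rw [Real.dist_eq]
    exact hDpair N (Pn n) (Pn n') (hrefines N n hn) (hPn4 n) (hrefines N n' hn') (hPn4 n')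
  obtain ⟨U, hU⟩ := cauchySeq_tendsto_of_complete hcauchy
  refine ⟨U, ?_⟩
  intro ε hε
  have e1 : ∀ᶠ n : ℕ in atTop, 1/((n:ℝ)+1) < ε/2 :=
    tendsto_one_div_add_atTop_nhds_zero_nat.eventually_lt_const (by linarith)
  have e2 : ∀ᶠ n : ℕ in atTop, |Usum f g (Pn n) - U| < ε/2 := by
    obtain ⟨N, hN⟩ := Metric.tendsto_atTop.mp hU (ε/2) (by linarith)
    refine eventually_atTop.mpr ⟨N, fun n hn => ?_⟩
    have := hN n hn
    rwa [Real.dist_eq] at this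
  obtain ⟨n, hn1, hn2⟩ := (e1.and e2).exists
  refine ⟨Fn n, fun x hx => hFsub n x hx, ?_⟩
  intro P hrefP hintP
  have hrefPD : Refines P (Dn n) := by
    intro x hx
    apply hrefP
    simp only [hFn, Finset.mem_union, Finset.mem_biUnion, Finset.mem_range]
    exact Or.inl ⟨n, by omega, hx⟩
  have h1 := hDpair n P (Pn n) hrefPD hintP (hrefines n n le_rfl) (hPn4 n)
  calc |Usum f g P - U| = |(Usum f g P - Usum f g (Pn n)) + (Usum f g (Pn n) - U)| := by ring_nf
    _ ≤ |Usum f g P - Usum f g (Pn n)| + |Usum f g (Pn n) - U| := abs_add_le _ _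
    _ < ε := by linarith
-- PART 11: duality between partitions and the identification K = U
lemma exists_div_interval_strict {m : ℕ} {σ : ℕ → ℝ} (hm : 0 < m)
    (hmono : ∀ k < m, σ k < σ (k+1)) {x : ℝ} (h1 : σ 0 ≤ x) (h2 : x < σ m) :
    ∃ k < m, σ k ≤ x ∧ x < σ (k+1) := by
  classical
  set p : ℕ → Prop := fun i => σ i ≤ x with hp
  set k := Nat.findGreatest p (m-1) with hk
  have hkle : k ≤ m - 1 := Nat.findGreatest_le _
  have hpk : p k := Nat.findGreatest_spec (Nat.zero_le _) h1
  refine ⟨k, by omega, hpk, ?_⟩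
  by_contra hcon
  push_neg at hcon
  rcases Nat.lt_or_ge (k+1) m with h | h
  · have hng : ¬ p (k+1) := Nat.findGreatest_is_greatest (Nat.lt_succ_self k) (by omega)
    exact hng hcon
  · have hkm : k + 1 = m := by omega
    rw [hkm] at hcon
    linarith

lemma exists_pt_interval_strict {a b : ℝ} (P : TaggedPartition a b) {x : ℝ}
    (hx1 : a ≤ x) (hx2 : x < b) :
    ∃ j < P.n, P.pts j ≤ x ∧ x < P.pts (j+1) := by
  apply exists_div_interval_strict P.n_pos P.pts_mono
  · rw [P.pts_zero]; exact hx1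
  · rw [P.pts_last]; exact hx2

lemma dual_partition {a b : ℝ} (Q : TaggedPartition a b) (hQint : InteriorTags Q) :
    ∃ dQ : TaggedPartition a b, dQ.n = 2*Q.n ∧
      (∀ k ≤ Q.n, dQ.pts (2*k) = Q.pts k) ∧
      (∀ k < Q.n, dQ.pts (2*k+1) = Q.tag k) ∧
      (∀ k < Q.n, dQ.tag (2*k) = Q.pts k) ∧
      (∀ k < Q.n, dQ.tag (2*k+1) = Q.pts (k+1)) := by
  set pts' : ℕ → ℝ := fun j => if j % 2 = 0 then Q.pts (j/2) else Q.tag (j/2) with hpts'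
  set tag' : ℕ → ℝ := fun j => if j % 2 = 0 then Q.pts (j/2) else Q.pts (j/2 + 1) with htag'
  have hpe : ∀ k, pts' (2*k) = Q.pts k := by
    intro k
    simp only [hpts']
    rw [if_pos (by omega)]
    congr 1
    omega
  have hpo : ∀ k, pts' (2*k+1) = Q.tag k := by
    intro k
    simp only [hpts']
    rw [if_neg (by omega)]
    congr 1
    omega
  have hte : ∀ k, tag' (2*k) = Q.pts k := by
    intro k
    simp only [htag']
    rw [if_pos (by omega)]
    congr 1
    omega
  have hto : ∀ k, tag' (2*k+1) = Q.pts (k+1) := by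
    intro k
    simp only [htag']
    rw [if_neg (by omega)]
    have : (2*k+1)/2 = k := by omega
    rw [this]
  refine ⟨⟨2*Q.n, pts', tag', by have := Q.n_pos; omega, ?_, ?_, ?_, ?_⟩, rfl,
    fun k _ => hpe k, fun k _ => hpo k, fun k _ => hte k, fun k _ => hto k⟩
  · have := hpe 0
    simpa [Q.pts_zero] using this
  · have := hpe Q.n
    simpa [Q.pts_last] using this
  · intro j hj
    rcases Nat.even_or_odd j with ⟨k, hk⟩ | ⟨k, hk⟩
    · have hkn : k < Q.n := by omega
      have e1 : pts' j = Q.pts k := by rw [hk, show k + k = 2*k by ring, hpe]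
      have e2 : pts' (j+1) = Q.tag k := by rw [hk, show k + k + 1 = 2*k+1 by ring, hpo]
      rw [e1, e2]
      exact (hQint k hkn).1
    · have hkn : k < Q.n := by omega
      have e1 : pts' j = Q.tag k := by rw [hk, hpo]
      have e2 : pts' (j+1) = Q.pts (k+1) := by
        rw [hk, show 2*k + 1 + 1 = 2*(k+1) by ring, hpe]
      rw [e1, e2]
      exact (hQint k hkn).2
  · intro j hj
    rcases Nat.even_or_odd j with ⟨k, hk⟩ | ⟨k, hk⟩
    · have hkn : k < Q.n := by omega
      have e1 : pts' j = Q.pts k := by rw [hk, show k + k = 2*k by ring, hpe]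
      have e2 : pts' (j+1) = Q.tag k := by rw [hk, show k + k + 1 = 2*k+1 by ring, hpo]
      have e3 : tag' j = Q.pts k := by rw [hk, show k + k = 2*k by ring, hte]
      rw [e1, e2, e3]
      exact ⟨le_rfl, le_of_lt (hQint k hkn).1⟩
    · have hkn : k < Q.n := by omega
      have e1 : pts' j = Q.tag k := by rw [hk, hpo]
      have e2 : pts' (j+1) = Q.pts (k+1) := by
        rw [hk, show 2*k + 1 + 1 = 2*(k+1) by ring, hpe]
      have e3 : tag' j = Q.pts (k+1) := by rw [hk, hto]
      rw [e1, e2, e3]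
      exact ⟨le_of_lt (hQint k hkn).2, le_rfl⟩
-- PART 12: identification of the KS integral with the Dushnik U-limit
lemma RS_dual_eq_Usum (f g : ℝ → ℝ) {a b : ℝ} (Q dQ : TaggedPartition a b)
    (hn : dQ.n = 2*Q.n)
    (hpe : ∀ k ≤ Q.n, dQ.pts (2*k) = Q.pts k)
    (hpo : ∀ k < Q.n, dQ.pts (2*k+1) = Q.tag k)
    (hte : ∀ k < Q.n, dQ.tag (2*k) = Q.pts k)
    (hto : ∀ k < Q.n, dQ.tag (2*k+1) = Q.pts (k+1)) :
    RS f g dQ = Usum f g Q := by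
  rw [RS, Usum, hn, sum_range_two_mul (fun j => f (dQ.tag j) * (g (dQ.pts (j+1)) - g (dQ.pts j))) Q.n]
  apply Finset.sum_congr rfl
  intro k hk
  simp only [Finset.mem_range] at hk
  have e1 := hpe k (le_of_lt hk)
  have e2 := hpo k hk
  have e3 := hte k hk
  have e4 := hto k hk
  have e5 : dQ.pts (2*k+1+1) = Q.pts (k+1) := by
    rw [show 2*k+1+1 = 2*(k+1) by ring]
    exact hpe (k+1) hk
  rw [e1, e2, e3, e4, e5]

lemma KS_eq_U {f g : ℝ → ℝ} {a b : ℝ} (hab : a < b) {K U : ℝ}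
    (hK : HasKS f g a b K)
    (hU : ∀ ε > 0, ∃ Dset : Finset ℝ, ↑Dset ⊆ Icc a b ∧
      ∀ P : TaggedPartition a b, Refines P Dset → InteriorTags P → |Usum f g P - U| < ε) :
    K = U := by
  classical
  have key : ∀ ε > 0, |K - U| < 2*ε := by
    intro ε hε
    obtain ⟨δ, hδp, hδP⟩ := hK ε hε
    obtain ⟨Dset, hDsub, hDP⟩ := hU ε hε
    -- gauge that forces Dset points to be tags
    set dmin : ℝ → ℝ := fun t => if h : (Dset.erase t).Nonempty
      then ((Dset.erase t).inf' h (fun d => |t - d|))/2 else 1 with hdmin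
    have hdminpos : ∀ t, 0 < dmin t := by
      intro t
      simp only [hdmin]
      split_ifs with h
      · have h2 : 0 < (Dset.erase t).inf' h (fun d => |t - d|) := by
          rw [Finset.lt_inf'_iff]
          intro d hd
          exact abs_pos.mpr (sub_ne_zero.mpr (Ne.symm (Finset.ne_of_mem_erase hd)))
        linarith
      · norm_num
    have hdmin_lt : ∀ t d, d ∈ Dset → d ≠ t → dmin t < |t - d| := by
      intro t d hd hdt
      have hne : (Dset.erase t).Nonempty := ⟨d, Finset.mem_erase.mpr ⟨hdt, hd⟩⟩
      have h1 : (Dset.erase t).inf' hne (fun d => |t - d|) ≤ |t - d| :=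
        Finset.inf'_le _ (Finset.mem_erase.mpr ⟨hdt, hd⟩)
      have h2 : 0 < (Dset.erase t).inf' hne (fun d => |t - d|) := by
        rw [Finset.lt_inf'_iff]
        intro d' hd'
        exact abs_pos.mpr (sub_ne_zero.mpr (Ne.symm (Finset.ne_of_mem_erase hd')))
      simp only [hdmin, dif_pos hne]
      linarith
    set δ₂ : ℝ → ℝ := fun t => min (δ t) (dmin t) with hδ₂
    obtain ⟨P₀, hP₀⟩ := cousin hab δ₂ (fun t ht => lt_min (hδp t ht).1 (hdminpos t))
    have htagD : ∀ d ∈ Dset, ∃ j < P₀.n, P₀.tag j = d := by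
      intro d hd
      obtain ⟨j, hj, h1, h2⟩ := exists_pt_interval P₀ (hDsub hd)
      refine ⟨j, hj, ?_⟩
      by_contra hne2
      have hball := hP₀ j hj ⟨h1, h2⟩
      have habs : |P₀.tag j - d| ≤ δ₂ (P₀.tag j) :=
        abs_sub_le_iff.mpr ⟨by linarith [hball.1], by linarith [hball.2]⟩
      have hlt := hdmin_lt (P₀.tag j) d hd (fun h => hne2 h.symm)
      have hmin : δ₂ (P₀.tag j) ≤ dmin (P₀.tag j) := min_le_right _ _
      linarith
    set F := (Finset.range (P₀.n+1)).image P₀.pts ∪ (Finset.range P₀.n).image P₀.tag with hF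
    have haF : a ∈ F := by
      simp only [hF, Finset.mem_union, Finset.mem_image, Finset.mem_range]
      exact Or.inl ⟨0, by omega, P₀.pts_zero⟩
    have hbF : b ∈ F := by
      simp only [hF, Finset.mem_union, Finset.mem_image, Finset.mem_range]
      exact Or.inl ⟨P₀.n, by omega, P₀.pts_last⟩
    have hFsub : ∀ x ∈ F, x ∈ Icc a b := by
      intro x hx
      simp only [hF, Finset.mem_union, Finset.mem_image, Finset.mem_range] at hx
      rcases hx with ⟨j, hj, rfl⟩ | ⟨j, hj, rfl⟩
      · exact P₀.pts_mem (by omega)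
      · exact P₀.tag_mem_Icc hj
    set T : ℝ → ℝ → ℝ := fun u v =>
      if h : ∃ τ, τ ∈ Ioo u v ∧ τ - u ≤ δ u ∧ v - τ ≤ δ v then h.choose else (u+v)/2 with hT
    have hTmem : ∀ u v, u < v → T u v ∈ Ioo u v := by
      intro u v huv
      simp only [hT]
      split_ifs with h
      · exact h.choose_spec.1
      · exact ⟨by linarith, by linarith⟩
    obtain ⟨Q, hQF, hQenum, hQtag, hQint, hQcons⟩ := exists_partition hab F haF hbF hFsub T hTmem
    have hinterior : ∀ i < P₀.n, ∀ x ∈ F, P₀.pts i < x → x < P₀.pts (i+1) → x = P₀.tag i := by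
      intro i hi x hx h1 h2
      simp only [hF, Finset.mem_union, Finset.mem_image, Finset.mem_range] at hx
      rcases hx with ⟨j, hj, rfl⟩ | ⟨j, hj, rfl⟩
      · exfalso
        have hji : i < j := by
          by_contra h
          push_neg at h
          exact absurd (P₀.pts_le h (le_of_lt hi)) (not_le.mpr h1)
        have hij : j < i+1 := by
          by_contra h
          push_neg at h
          exact absurd (P₀.pts_le h (by omega)) (not_le.mpr h2)
        omega
      · rcases Nat.lt_trichotomy j i with h | h | h
        · exfalso
          have ha1 : P₀.tag j ≤ P₀.pts (j+1) := (P₀.tag_mem j hj).2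
          have ha2 : P₀.pts (j+1) ≤ P₀.pts i := P₀.pts_le (by omega) (le_of_lt hi)
          linarith
        · rw [h]
        · exfalso
          have ha1 : P₀.pts (i+1) ≤ P₀.pts j := P₀.pts_le (by omega) (by omega)
          have ha2 : P₀.pts j ≤ P₀.tag j := (P₀.tag_mem j hj).1
          linarith
    have hgap : ∀ j < Q.n, ∃ τ, τ ∈ Ioo (Q.pts j) (Q.pts (j+1)) ∧
        τ - Q.pts j ≤ δ (Q.pts j) ∧ Q.pts (j+1) - τ ≤ δ (Q.pts (j+1)) := by
      intro j hj
      have huv : Q.pts j < Q.pts (j+1) := Q.pts_mono j hj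
      have huF : Q.pts j ∈ F := hQF j (le_of_lt hj)
      have hvF : Q.pts (j+1) ∈ F := hQF (j+1) hj
      have huIcc : Q.pts j ∈ Icc a b := hFsub _ huF
      have hvIcc : Q.pts (j+1) ∈ Icc a b := hFsub _ hvF
      have hδu := (hδp _ huIcc).1
      have hδv := (hδp _ hvIcc).1
      have hub : Q.pts j < b := lt_of_lt_of_le huv hvIcc.2
      obtain ⟨i, hi, hi1, hi2⟩ := exists_pt_interval_strict P₀ huIcc.1 hub
      have hvle : Q.pts (j+1) ≤ P₀.pts (i+1) := by
        by_contra hcon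
        push_neg at hcon
        have hmem : P₀.pts (i+1) ∈ F := by
          simp only [hF, Finset.mem_union, Finset.mem_image, Finset.mem_range]
          exact Or.inl ⟨i+1, by omega, rfl⟩
        exact hQcons j hj _ hmem ⟨hi2, hcon⟩
      have hballu := hP₀ i hi ⟨hi1, le_trans (le_of_lt huv) hvle⟩
      have hξuv : P₀.tag i = Q.pts j ∨ P₀.tag i = Q.pts (j+1) := by
        have hξmem := P₀.tag_mem i hi
        have hξF : P₀.tag i ∈ F := by
          simp only [hF, Finset.mem_union, Finset.mem_image, Finset.mem_range]
          exact Or.inr ⟨i, hi, rfl⟩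
        rcases lt_trichotomy (P₀.tag i) (Q.pts j) with h | h | h
        · left
          have heq : Q.pts j = P₀.tag i := by
            apply hinterior i hi _ huF ?_ (lt_of_lt_of_le huv hvle)
            rcases eq_or_lt_of_le hi1 with h' | h'
            · exfalso
              rw [← h'] at h
              exact absurd hξmem.1 (not_le.mpr h)
            · exact h'
          exact heq.symm
        · exact Or.inl h
        · rcases lt_trichotomy (P₀.tag i) (Q.pts (j+1)) with h2 | h2 | h2
          · exfalso
            exact hQcons j hj _ hξF ⟨h, h2⟩
          · exact Or.inr h2
          · right
            have heq : Q.pts (j+1) = P₀.tag i := by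
              apply hinterior i hi _ hvF (lt_of_le_of_lt hi1 huv)
              exact lt_of_lt_of_le h2 hξmem.2
            exact heq.symm
      have hvu : Q.pts (j+1) - Q.pts j < δ (Q.pts j) + δ (Q.pts (j+1)) := by
        rcases hξuv with h | h
        · have h1 := hballu.2
          have h2 : δ₂ (P₀.tag i) ≤ δ (P₀.tag i) := min_le_left _ _
          have h3 : Q.pts (j+1) ≤ P₀.tag i + δ₂ (P₀.tag i) := by
            refine le_trans hvle ?_
            have := hP₀ i hi ⟨le_of_lt (P₀.pts_mono i hi), le_rfl⟩
            exact this.2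
          rw [h] at h2 h3
          linarith
        · have h1 : P₀.tag i - δ₂ (P₀.tag i) ≤ P₀.pts i := by
            have := hP₀ i hi ⟨le_rfl, le_of_lt (P₀.pts_mono i hi)⟩
            exact this.1
          have h2 : δ₂ (P₀.tag i) ≤ δ (P₀.tag i) := min_le_left _ _
          rw [h] at h1 h2
          linarith
      have hlow : max (Q.pts j) (Q.pts (j+1) - δ (Q.pts (j+1))) <
          min (Q.pts (j+1)) (Q.pts j + δ (Q.pts j)) := by
        apply lt_min_iff.mpr
        constructor
        · exact max_lt_iff.mpr ⟨huv, by linarith⟩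
        · exact max_lt_iff.mpr ⟨by linarith, by linarith⟩
      set τ := (max (Q.pts j) (Q.pts (j+1) - δ (Q.pts (j+1)))
        + min (Q.pts (j+1)) (Q.pts j + δ (Q.pts j)))/2 with hτ
      have hτ1 : max (Q.pts j) (Q.pts (j+1) - δ (Q.pts (j+1))) < τ := by
        rw [hτ]; linarith
      have hτ2 : τ < min (Q.pts (j+1)) (Q.pts j + δ (Q.pts j)) := by
        rw [hτ]; linarith
      refine ⟨τ, ⟨lt_of_le_of_lt (le_max_left _ _) hτ1,
        lt_of_lt_of_le hτ2 (min_le_left _ _)⟩, ?_, ?_⟩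
      · have := lt_of_lt_of_le hτ2 (min_le_right _ _)
        linarith
      · have := lt_of_le_of_lt (le_max_right _ _) hτ1
        linarith
    have hQtagbound : ∀ j < Q.n, Q.tag j - Q.pts j ≤ δ (Q.pts j) ∧
        Q.pts (j+1) - Q.tag j ≤ δ (Q.pts (j+1)) := by
      intro j hj
      have heq := hQtag j hj
      obtain ⟨τ, hτ1, hτ2, hτ3⟩ := hgap j hj
      have hex : ∃ τ, τ ∈ Ioo (Q.pts j) (Q.pts (j+1)) ∧
          τ - Q.pts j ≤ δ (Q.pts j) ∧ Q.pts (j+1) - τ ≤ δ (Q.pts (j+1)) := ⟨τ, hτ1, hτ2, hτ3⟩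
      have heval : T (Q.pts j) (Q.pts (j+1)) = hex.choose := by
        simp only [hT, dif_pos hex]
      rw [heq, heval]
      exact ⟨hex.choose_spec.2.1, hex.choose_spec.2.2⟩
    -- Q refines Dset
    have hQref : Refines Q Dset := by
      intro d hd
      obtain ⟨j, hj, hje⟩ := htagD d hd
      apply hQenum
      simp only [hF, Finset.mem_union, Finset.mem_image, Finset.mem_range]
      exact Or.inr ⟨j, hj, hje⟩
    -- dual partition
    obtain ⟨dQ, hn, hpe, hpo, hte, hto⟩ := dual_partition Q hQint
    have hfine : IsFine δ dQ := by
      intro j hj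
      rw [hn] at hj
      rcases Nat.even_or_odd j with ⟨k, hk⟩ | ⟨k, hk⟩
      · have hkn : k < Q.n := by omega
        have e1 : dQ.pts j = Q.pts k := by rw [hk, show k + k = 2*k by ring]; exact hpe k (le_of_lt hkn)
        have e2 : dQ.pts (j+1) = Q.tag k := by rw [hk, show k + k + 1 = 2*k+1 by ring]; exact hpo k hkn
        have e3 : dQ.tag j = Q.pts k := by rw [hk, show k + k = 2*k by ring]; exact hte k hkn
        rw [e1, e2, e3]
        intro z hz
        have hb1 := (hQtagbound k hkn).1
        exact ⟨by linarith [hz.1, (hδp _ (Q.pts_mem (le_of_lt hkn))).1], by linarith [hz.2]⟩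
      · have hkn : k < Q.n := by omega
        have e1 : dQ.pts j = Q.tag k := by rw [hk]; exact hpo k hkn
        have e2 : dQ.pts (j+1) = Q.pts (k+1) := by
          rw [hk, show 2*k + 1 + 1 = 2*(k+1) by ring]; exact hpe (k+1) hkn
        have e3 : dQ.tag j = Q.pts (k+1) := by rw [hk]; exact hto k hkn
        rw [e1, e2, e3]
        intro z hz
        have hb2 := (hQtagbound k hkn).2
        exact ⟨by linarith [hz.1], by linarith [hz.2, (hδp _ (Q.pts_mem hkn)).1]⟩
    have h1 := hδP dQ hfine
    have h2 := hDP Q hQref hQint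
    have h3 := RS_dual_eq_Usum f g Q dQ hn hpe hpo hte hto
    rw [h3] at h1
    calc |K - U| = |(Usum f g Q - U) - (Usum f g Q - K)| := by ring_nf
      _ ≤ |Usum f g Q - U| + |Usum f g Q - K| := abs_sub _ _
      _ < 2*ε := by linarith
  by_contra hne
  have h0 : 0 < |K - U| := abs_pos.mpr (sub_ne_zero.mpr hne)
  have := key (|K - U|/4) (by linarith)
  linarith

/-- for regulated `f` and regulated `g` of bounded variation,
both `(K)∫_a^b f dg` and `(D)∫_a^b g df` exist and
`(K)∫_a^b f dg = f(b)g(b) − f(a)g(a) − (D)∫_a^b g df`. -/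
theorem stmt17 (a b : ℝ) (hab : a < b) (f g : ℝ → ℝ)
    (hf : Regulated f a b) (hg : Regulated g a b)
    (hgbv : BoundedVariationOn g (Set.Icc a b)) :
    ∃ K D : ℝ, HasKS f g a b K ∧ HasDushnik g f a b D ∧
      K = f b * g b - f a * g a - D := by
  obtain ⟨K, hK⟩ := KS_exists hab hf hg hgbv
  obtain ⟨U, hU⟩ := DushnikU_exists hab hf hg hgbv
  have hKU : K = U := KS_eq_U hab hK hU
  refine ⟨K, f b * g b - f a * g a - U, hK, ?_, by rw [hKU]; ring⟩
  intro ε hε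
  obtain ⟨Dset, hDsub, hDP⟩ := hU ε hε
  refine ⟨Dset, hDsub, ?_⟩
  intro P href hint
  rw [RS_eq_C_sub_Usum f g P]
  have h1 := hDP P href hint
  rw [show f b * g b - f a * g a - Usum f g P - (f b * g b - f a * g a - U)
    = U - Usum f g P by ring, abs_sub_comm]
  exact h1
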